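/- arXiv:2507.02131 — 10 statements merged into one kernel-verified Lean document; each statement's English description precedes it below -/
import Mathlib

section
/- For any class-K function α, any class-K∞ function ρ, and any nonnegative reals a, b, it holds that α(a+b) ≤ α((Id+ρ)(a)) + α((Id+ρ⁻¹)(b)). -/
/-- A class-`K` function: continuous, strictly increasing on `[0,∞)`, and zero at zero. -/
def IsClassK (α : ℝ → ℝ) : Prop :=
  ContinuousOn α (Set.Ici 0) ∧ StrictMonoOn α (Set.Ici 0) ∧ α 0 = 0

/-- A class-`K∞` function: class-`K` and unbounded. -/
def IsClassKInf (α : ℝ → ℝ) : Prop :=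
  IsClassK α ∧ Filter.Tendsto α Filter.atTop Filter.atTop

/-- Weak triangle inequality: for any class-K function `α`, any class-K∞ function `ρ`
(with inverse `ρinv`, itself class-K∞), and any nonnegative reals `a, b`,
`α (a + b) ≤ α ((Id + ρ) a) + α ((Id + ρ⁻¹) b)`. -/
theorem weak_triangle_inequality (α ρ ρinv : ℝ → ℝ)
    (hα : IsClassK α) (hρ : IsClassKInf ρ) (hρinv : IsClassKInf ρinv)
    (hinv : ∀ r ∈ Set.Ici (0 : ℝ), ρinv (ρ r) = r ∧ ρ (ρinv r) = r)
    (a b : ℝ) (ha : 0 ≤ a) (hb : 0 ≤ b) :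
    α (a + b) ≤ α (a + ρ a) + α (b + ρinv b) := by
  obtain ⟨-, hαmono, hα0⟩ := hα
  obtain ⟨⟨-, hρmono, hρ0⟩, -⟩ := hρ
  obtain ⟨⟨-, hρimono, hρi0⟩, -⟩ := hρinv
  have hρa : 0 ≤ ρ a := hρ0 ▸ (hρmono.monotoneOn (Set.mem_Ici.mpr le_rfl) ha ha)
  have hρib : 0 ≤ ρinv b := hρi0 ▸ (hρimono.monotoneOn (Set.mem_Ici.mpr le_rfl) hb hb)
  have hαnn : ∀ x : ℝ, 0 ≤ x → 0 ≤ α x := fun x hx =>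
    hα0 ▸ (hαmono.monotoneOn (Set.mem_Ici.mpr le_rfl) hx hx)
  rcases le_or_gt b (ρ a) with h | h
  · have h1 : α (a + b) ≤ α (a + ρ a) :=
      hαmono.monotoneOn (Set.mem_Ici.mpr (by positivity)) (Set.mem_Ici.mpr (by positivity)) (by linarith)
    have h2 : 0 ≤ α (b + ρinv b) := hαnn _ (by positivity)
    linarith
  · have hab : a ≤ ρinv b := by
      have := (hinv a ha).1
      calc a = ρinv (ρ a) := this.symm
        _ ≤ ρinv b := hρimono.monotoneOn hρa hb h.le
    have h1 : α (a + b) ≤ α (b + ρinv b) :=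
      hαmono.monotoneOn (Set.mem_Ici.mpr (by positivity)) (Set.mem_Ici.mpr (by positivity)) (by linarith)
    have h2 : 0 ≤ α (a + ρ a) := hαnn _ (by positivity)
    linarith
end

section
/- If ω₁, ω₂: ℝⁿ → ℝ are continuous, positive definite with respect to a point χ* (i.e., they vanish at χ* and are strictly positive elsewhere), and radially unbounded (ω_i(χ) → ∞ as ‖χ‖ → ∞), then there exist class-K∞ functions ρ₁, ρ₂ such that ρ₁(ω₂(χ)) ≤ ω₁(χ) ≤ ρ₂(ω₂(χ)) for all χ ∈ ℝⁿ. -/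
open Set Filter MeasureTheory intervalIntegral Topology

lemma minorant_classKInf {g : ℝ → ℝ} (hg : Monotone g) (hg0 : g 0 = 0)
    (hgle : ∀ s, 0 ≤ s → g s ≤ s) (hgpos : ∀ s, 0 < s → 0 < g s)
    (hgtop : Filter.Tendsto g atTop atTop) :
    ∃ ρ, IsClassKInf ρ ∧ ∀ s, 0 ≤ s → ρ s ≤ g s := by
  have hgnn : ∀ s, 0 ≤ s → 0 ≤ g s := fun s hs => hg0 ▸ hg hs
  have hint : ∀ a b : ℝ, IntervalIntegrable g volume a b := fun a b => hg.intervalIntegrable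
  set D : ℝ → ℝ := fun s => ∫ u in (0:ℝ)..1, g (s * u) with hDdef
  have hcomp : ∀ s : ℝ, 0 ≤ s → ∀ a b : ℝ,
      IntervalIntegrable (fun u => g (s*u)) volume a b := by
    intro s hs a b
    exact Monotone.intervalIntegrable (fun x y hxy => hg (mul_le_mul_of_nonneg_left hxy hs))
  have hDle : ∀ s, 0 ≤ s → D s ≤ g s := by
    intro s hs
    have h : D s ≤ ∫ _u in (0:ℝ)..1, g s := by
      apply integral_mono_on zero_le_one (hcomp s hs 0 1) intervalIntegrable_const
      intro u hu
      exact hg (by nlinarith [hu.1, hu.2])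
    simpa using h
  have hDnn : ∀ s, 0 ≤ s → 0 ≤ D s := by
    intro s hs
    have h : (∫ _u in (0:ℝ)..1, (0:ℝ)) ≤ D s := by
      apply integral_mono_on zero_le_one intervalIntegrable_const (hcomp s hs 0 1)
      intro u hu
      exact hg0 ▸ hg (mul_nonneg hs hu.1)
    simpa using h
  have hDhalf : ∀ s, 0 ≤ s → g (s/2) / 2 ≤ D s := by
    intro s hs
    have hsplit : (∫ u in (0:ℝ)..(1/2:ℝ), g (s*u)) + ∫ u in (1/2:ℝ)..1, g (s*u) = D s :=
      integral_add_adjacent_intervals (hcomp s hs 0 (1/2)) (hcomp s hs (1/2) 1)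
    have h1 : (0:ℝ) ≤ ∫ u in (0:ℝ)..(1/2:ℝ), g (s*u) := by
      have h : (∫ _u in (0:ℝ)..(1/2:ℝ), (0:ℝ)) ≤ ∫ u in (0:ℝ)..(1/2:ℝ), g (s*u) := by
        apply integral_mono_on (by norm_num) intervalIntegrable_const (hcomp s hs 0 (1/2))
        intro u hu
        exact hg0 ▸ hg (mul_nonneg hs hu.1)
      simpa using h
    have h2 : g (s/2) * (1/2) ≤ ∫ u in (1/2:ℝ)..1, g (s*u) := by
      have h : (∫ _u in (1/2:ℝ)..1, g (s * (1/2))) ≤ ∫ u in (1/2:ℝ)..1, g (s*u) := by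
        apply integral_mono_on (by norm_num) intervalIntegrable_const (hcomp s hs (1/2) 1)
        intro u hu
        exact hg (mul_le_mul_of_nonneg_left hu.1 hs)
      have e : s * (1/2) = s / 2 := by ring
      rw [e] at h
      have h' : g (s/2) * (1 - 2⁻¹) ≤ ∫ u in (1/2:ℝ)..1, g (s*u) := by
        simpa [mul_comm] using h
      calc g (s/2) * (1/2) = g (s/2) * (1 - 2⁻¹) := by ring
      _ ≤ _ := h'
    linarith
  have hDmono : ∀ a b : ℝ, 0 ≤ a → a ≤ b → D a ≤ D b := by
    intro a b ha hab
    apply integral_mono_on zero_le_one (hcomp a ha 0 1) (hcomp b (ha.trans hab) 0 1)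
    intro u hu
    exact hg (mul_le_mul_of_nonneg_right hab hu.1)
  have hDpos : ∀ s : ℝ, 0 < s → 0 < D s := by
    intro s hs
    have := hDhalf s hs.le
    have := hgpos (s/2) (by linarith)
    linarith
  set F : ℝ → ℝ := fun x => ∫ t in (0:ℝ)..x, g t with hFdef
  have hFc : Continuous F := intervalIntegral.continuous_primitive hint 0
  have hDeq : ∀ s : ℝ, s ≠ 0 → D s = s⁻¹ * F s := by
    intro s hs
    have h := intervalIntegral.integral_comp_mul_left (a := (0:ℝ)) (b := 1) g hs
    simpa [smul_eq_mul] using h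
  set ρ : ℝ → ℝ := fun s => D s * (s / (1 + s)) with hρdef
  have hρ0 : ρ 0 = 0 := by simp [hρdef]
  have hφlt : ∀ a b : ℝ, 0 ≤ a → a < b → a / (1 + a) < b / (1 + b) := by
    intro a b ha hab
    rw [div_lt_div_iff₀ (by linarith) (by linarith)]
    nlinarith
  have hφnn : ∀ a : ℝ, 0 ≤ a → 0 ≤ a / (1 + a) := by
    intro a ha; positivity
  have hρle : ∀ s, 0 ≤ s → ρ s ≤ g s := by
    intro s hs
    have h1 : s / (1+s) ≤ 1 := by
      rw [div_le_one (by linarith)]; linarith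
    calc ρ s ≤ D s * 1 := mul_le_mul_of_nonneg_left h1 (hDnn s hs)
    _ = D s := mul_one _
    _ ≤ g s := hDle s hs
  have hρmono : StrictMonoOn ρ (Set.Ici 0) := by
    intro a ha b hb hab
    simp only [mem_Ici] at ha hb
    rcases eq_or_lt_of_le ha with h0 | h0
    · have hbpos : 0 < b := by rw [← h0] at hab; exact hab
      rw [← h0, hρ0]
      exact mul_pos (hDpos b hbpos) (by positivity)
    · calc ρ a = D a * (a / (1+a)) := rfl
      _ < D a * (b / (1+b)) := mul_lt_mul_of_pos_left (hφlt a b ha hab) (hDpos a h0)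
      _ ≤ D b * (b / (1+b)) := mul_le_mul_of_nonneg_right (hDmono a b ha hab.le) (hφnn b hb)
      _ = ρ b := rfl
  have hρcont : ContinuousOn ρ (Set.Ici 0) := by
    intro s hs
    simp only [mem_Ici] at hs
    rcases eq_or_lt_of_le hs with h0 | h0
    · -- continuity at 0 within Ici 0 by squeeze
      rw [← h0]
      have hub : ∀ s ∈ Set.Ici (0:ℝ), ρ s ≤ s := fun s hs' =>
        (hρle s hs').trans (hgle s hs')
      have hlb : ∀ s ∈ Set.Ici (0:ℝ), 0 ≤ ρ s := fun s hs' =>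
        mul_nonneg (hDnn s hs') (hφnn s hs')
      have : Filter.Tendsto ρ (nhdsWithin 0 (Set.Ici 0)) (nhds 0) := by
        apply tendsto_of_tendsto_of_tendsto_of_le_of_le' (f := ρ)
          (g := fun _ => (0:ℝ)) (h := fun s => s) tendsto_const_nhds
        · exact (Filter.tendsto_id.mono_left nhdsWithin_le_nhds)
        · exact eventually_nhdsWithin_of_forall hlb
        · exact eventually_nhdsWithin_of_forall hub
      simpa [ContinuousWithinAt, hρ0] using this
    · apply ContinuousWithinAt.mono _ (subset_univ _)
      rw [continuousWithinAt_univ]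
      have hev : ρ =ᶠ[nhds s] fun x => (x⁻¹ * F x) * (x / (1 + x)) := by
        filter_upwards [eventually_gt_nhds h0] with x hx
        rw [hρdef]
        simp only
        rw [hDeq x (ne_of_gt hx)]
      rw [continuousAt_congr hev]
      apply ContinuousAt.mul
      · exact ContinuousAt.mul (continuousAt_inv₀ (ne_of_gt h0)) hFc.continuousAt
      · exact ContinuousAt.div continuousAt_id (by fun_prop) (by linarith)
  have hρtop : Filter.Tendsto ρ atTop atTop := by
    have hbound : ∀ s : ℝ, 1 ≤ s → g (s/2) / 4 ≤ ρ s := by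
      intro s hs
      have h1 : (1:ℝ)/2 ≤ s / (1+s) := by
        rw [div_le_div_iff₀ (by norm_num) (by linarith)]; linarith
      have h2 : g (s/2) / 2 ≤ D s := hDhalf s (by linarith)
      have h3 : 0 ≤ g (s/2) / 2 := by
        have := hgnn (s/2) (by linarith); linarith
      calc g (s/2) / 4 = (g (s/2) / 2) * (1/2) := by ring
      _ ≤ D s * (s / (1+s)) := mul_le_mul h2 h1 (by norm_num) (hDnn s (by linarith))
      _ = ρ s := rfl
    apply tendsto_atTop_mono' atTop (eventually_atTop.2 ⟨1, hbound⟩)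
    have : Filter.Tendsto (fun s : ℝ => g (s/2)) atTop atTop :=
      hgtop.comp (tendsto_id.atTop_div_const (by norm_num))
    exact this.atTop_div_const (by norm_num)
  exact ⟨ρ, ⟨⟨hρcont, hρmono, hρ0⟩, hρtop⟩, hρle⟩

lemma majorant_classKInf {q : ℝ → ℝ} (hq : Monotone q) (hqnn : ∀ s, 0 ≤ q s)
    (hq0 : q 0 = 0) (hqc : ∀ ε : ℝ, 0 < ε → ∃ δ : ℝ, 0 < δ ∧ q δ ≤ ε) :
    ∃ ρ, IsClassKInf ρ ∧ ∀ s, 0 ≤ s → q s ≤ ρ s := by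
  have hint : ∀ a b : ℝ, IntervalIntegrable q volume a b := fun a b => hq.intervalIntegrable
  set B : ℝ → ℝ := fun s => ∫ u in (1:ℝ)..2, q (s * u) with hBdef
  have hcomp : ∀ s : ℝ, 0 ≤ s → ∀ a b : ℝ,
      IntervalIntegrable (fun u => q (s*u)) volume a b := by
    intro s hs a b
    exact Monotone.intervalIntegrable (fun x y hxy => hq (mul_le_mul_of_nonneg_left hxy hs))
  have hBge : ∀ s, 0 ≤ s → q s ≤ B s := by
    intro s hs
    have h : (∫ _u in (1:ℝ)..2, q s) ≤ B s := by
      apply integral_mono_on one_le_two intervalIntegrable_const (hcomp s hs 1 2)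
      intro u hu
      exact hq (by nlinarith [hu.1])
    have h2 : ((2:ℝ) - 1) * q s ≤ B s := by simpa using h
    linarith
  have hBle : ∀ s, 0 ≤ s → B s ≤ q (2*s) := by
    intro s hs
    have h : B s ≤ ∫ _u in (1:ℝ)..2, q (2*s) := by
      apply integral_mono_on one_le_two (hcomp s hs 1 2) intervalIntegrable_const
      intro u hu
      exact hq (by nlinarith [hu.2])
    have h2 : B s ≤ ((2:ℝ) - 1) * q (2*s) := by simpa using h
    linarith
  have hBnn : ∀ s, 0 ≤ s → 0 ≤ B s := fun s hs => (hqnn s).trans (hBge s hs)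
  have hBmono : ∀ a b : ℝ, 0 ≤ a → a ≤ b → B a ≤ B b := by
    intro a b ha hab
    apply integral_mono_on one_le_two (hcomp a ha 1 2) (hcomp b (ha.trans hab) 1 2)
    intro u hu
    exact hq (mul_le_mul_of_nonneg_right hab (by linarith [hu.1]))
  have hB0 : B 0 = 0 := by simp [hBdef, hq0]
  set F : ℝ → ℝ := fun x => ∫ t in (0:ℝ)..x, q t with hFdef
  have hFc : Continuous F := intervalIntegral.continuous_primitive hint 0
  have hBeq : ∀ s : ℝ, s ≠ 0 → B s = s⁻¹ * (F (2*s) - F s) := by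
    intro s hs
    have h := intervalIntegral.integral_comp_mul_left (a := (1:ℝ)) (b := 2) q hs
    have h2 : ((∫ x in (0:ℝ)..(2*s), q x) - ∫ x in (0:ℝ)..s, q x) = ∫ x in s..(s*2), q x := by
      rw [integral_interval_sub_left (hint 0 (2*s)) (hint 0 s)]
      norm_num [mul_comm]
    rw [hBdef]
    simp only
    rw [h, smul_eq_mul, mul_one]
    congr 1
    rw [hFdef]
    simp only
    rw [h2]
  set ρ : ℝ → ℝ := fun s => s + B s with hρdef
  have hρ0 : ρ 0 = 0 := by simp [hρdef, hB0]
  have hρge : ∀ s, 0 ≤ s → q s ≤ ρ s := by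
    intro s hs
    have := hBge s hs
    simp only [hρdef]
    linarith
  have hρmono : StrictMonoOn ρ (Set.Ici 0) := by
    intro a ha b hb hab
    simp only [mem_Ici] at ha hb
    have := hBmono a b ha hab.le
    simp only [hρdef]
    linarith
  have hρcont : ContinuousOn ρ (Set.Ici 0) := by
    intro s hs
    simp only [mem_Ici] at hs
    rcases eq_or_lt_of_le hs with h0 | h0
    · rw [← h0]
      rw [ContinuousWithinAt, hρ0]
      rw [Metric.tendsto_nhdsWithin_nhds]
      intro ε hε
      obtain ⟨δ₀, hδ₀, hqδ⟩ := hqc (ε/4) (by linarith)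
      refine ⟨min (δ₀/2) (ε/4), by positivity, ?_⟩
      intro x hx hdist
      simp only [mem_Ici] at hx
      rw [Real.dist_eq, sub_zero] at hdist ⊢
      rw [abs_lt] at hdist
      have hx1 : x < δ₀/2 := lt_of_lt_of_le hdist.2 (min_le_left _ _)
      have hx2 : x < ε/4 := lt_of_lt_of_le hdist.2 (min_le_right _ _)
      have hB : B x ≤ q (2*x) := hBle x hx
      have : q (2*x) ≤ q δ₀ := hq (by linarith)
      have hρx : ρ x ≤ x + ε/4 := by
        simp only [hρdef]; linarith
      rw [abs_of_nonneg (by simp only [hρdef]; linarith [hBnn x hx])]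
      calc ρ x ≤ x + ε/4 := hρx
      _ < ε := by linarith
    · apply ContinuousWithinAt.mono _ (subset_univ _)
      rw [continuousWithinAt_univ]
      have hev : ρ =ᶠ[nhds s] fun x => x + x⁻¹ * (F (2*x) - F x) := by
        filter_upwards [eventually_gt_nhds h0] with x hx
        rw [hρdef]
        simp only
        rw [hBeq x (ne_of_gt hx)]
      rw [continuousAt_congr hev]
      apply ContinuousAt.add continuousAt_id
      apply ContinuousAt.mul (continuousAt_inv₀ (ne_of_gt h0))
      apply ContinuousAt.sub
      · exact (hFc.comp (continuous_const.mul continuous_id)).continuousAt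
      · exact hFc.continuousAt
  have hρtop : Filter.Tendsto ρ atTop atTop := by
    apply tendsto_atTop_mono' atTop (_ : ∀ᶠ s in atTop, s ≤ ρ s) tendsto_id
    filter_upwards [eventually_ge_atTop (0:ℝ)] with s hs
    simp only [hρdef]
    linarith [hBnn s hs]
  exact ⟨ρ, ⟨⟨hρcont, hρmono, hρ0⟩, hρtop⟩, hρge⟩

/-- If `ω₁, ω₂ : ℝⁿ → ℝ` are continuous, positive definite with respect to `χ*`, and
radially unbounded, then there are class-K∞ functions `ρ₁, ρ₂` with
`ρ₁(ω₂(χ)) ≤ ω₁(χ) ≤ ρ₂(ω₂(χ))` for all `χ`. -/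
theorem sandwich_by_classKInf {n : ℕ}
    (ω₁ ω₂ : EuclideanSpace ℝ (Fin n) → ℝ) (χs : EuclideanSpace ℝ (Fin n))
    (h₁c : Continuous ω₁) (h₂c : Continuous ω₂)
    (h₁0 : ω₁ χs = 0) (h₂0 : ω₂ χs = 0)
    (h₁p : ∀ χ, χ ≠ χs → 0 < ω₁ χ) (h₂p : ∀ χ, χ ≠ χs → 0 < ω₂ χ)
    (h₁r : Filter.Tendsto ω₁ (Filter.comap norm Filter.atTop) Filter.atTop)
    (h₂r : Filter.Tendsto ω₂ (Filter.comap norm Filter.atTop) Filter.atTop) :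
    ∃ ρ₁ ρ₂ : ℝ → ℝ, IsClassKInf ρ₁ ∧ IsClassKInf ρ₂ ∧
      ∀ χ, ρ₁ (ω₂ χ) ≤ ω₁ χ ∧ ω₁ χ ≤ ρ₂ (ω₂ χ) := by
  have h₁nn : ∀ χ, 0 ≤ ω₁ χ := by
    intro χ
    by_cases h : χ = χs
    · rw [h, h₁0]
    · exact (h₁p χ h).le
  have h₂nn : ∀ χ, 0 ≤ ω₂ χ := by
    intro χ
    by_cases h : χ = χs
    · rw [h, h₂0]
    · exact (h₂p χ h).le
  have hrad : ∀ f : EuclideanSpace ℝ (Fin n) → ℝ,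
      Filter.Tendsto f (Filter.comap norm Filter.atTop) Filter.atTop →
      ∀ M : ℝ, ∃ R : ℝ, ∀ χ, R ≤ ‖χ‖ → M ≤ f χ := by
    intro f hf M
    have h := hf (Ici_mem_atTop M)
    rw [Filter.mem_map, Filter.mem_comap] at h
    obtain ⟨t, ht, hsub⟩ := h
    obtain ⟨R, hR⟩ := Filter.mem_atTop_sets.mp ht
    exact ⟨R, fun χ hχ => hsub (hR _ hχ)⟩
  have hcpt : ∀ f : EuclideanSpace ℝ (Fin n) → ℝ, Continuous f →
      Filter.Tendsto f (Filter.comap norm Filter.atTop) Filter.atTop →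
      ∀ s : ℝ, IsCompact {χ | f χ ≤ s} := by
    intro f hfc hfr s
    obtain ⟨R, hR⟩ := hrad f hfr (s + 1)
    apply Metric.isCompact_of_isClosed_isBounded (isClosed_le hfc continuous_const)
    apply (Metric.isBounded_closedBall (x := (0 : EuclideanSpace ℝ (Fin n))) (r := R)).subset
    intro χ hχ
    simp only [mem_setOf_eq] at hχ
    rw [Metric.mem_closedBall, dist_zero_right]
    by_contra hc
    push_neg at hc
    have := hR χ hc.le
    linarith
  -- the minorant function g
  set g : ℝ → ℝ := fun s => sInf (insert s (ω₁ '' {χ | s ≤ ω₂ χ})) with hgdef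
  have hbddg : ∀ s : ℝ, BddBelow (insert s (ω₁ '' {χ | s ≤ ω₂ χ})) := by
    intro s
    refine ⟨min s 0, ?_⟩
    rintro x (rfl | ⟨χ, -, rfl⟩)
    · exact min_le_left _ _
    · exact (min_le_right _ _).trans (h₁nn χ)
  have hgmono : Monotone g := by
    intro a b hab
    apply le_csInf (insert_nonempty _ _)
    rintro x (rfl | ⟨χ, hχ, rfl⟩)
    · exact (csInf_le (hbddg a) (mem_insert _ _)).trans hab
    · exact csInf_le (hbddg a) (mem_insert_of_mem _ ⟨χ, hab.trans hχ, rfl⟩)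
  have hgle : ∀ s : ℝ, g s ≤ s := fun s => csInf_le (hbddg s) (mem_insert _ _)
  have hg0 : g 0 = 0 := by
    apply le_antisymm (hgle 0)
    apply le_csInf (insert_nonempty _ _)
    rintro x (rfl | ⟨χ, -, rfl⟩)
    · exact le_refl 0
    · exact h₁nn χ
  have hgω : ∀ χ, g (ω₂ χ) ≤ ω₁ χ := fun χ =>
    csInf_le (hbddg _) (mem_insert_of_mem _ ⟨χ, Set.mem_setOf.mpr le_rfl, rfl⟩)
  have hgpos : ∀ s : ℝ, 0 < s → 0 < g s := by
    intro s hs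
    have hK : IsCompact ({χ | ω₁ χ ≤ s} ∩ {χ | s ≤ ω₂ χ}) :=
      (hcpt ω₁ h₁c h₁r s).inter_right (isClosed_le continuous_const h₂c)
    rcases ({χ | ω₁ χ ≤ s} ∩ {χ | s ≤ ω₂ χ}).eq_empty_or_nonempty with hemp | hne
    · have : s ≤ g s := by
        apply le_csInf (insert_nonempty _ _)
        rintro x (rfl | ⟨χ, hχ, rfl⟩)
        · exact le_refl _
        · by_contra hc
          push_neg at hc
          exact eq_empty_iff_forall_notMem.mp hemp χ ⟨hc.le, hχ⟩
      linarith
    · obtain ⟨χ₀, hχ₀K, hχ₀min⟩ := hK.exists_isMinOn hne h₁c.continuousOn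
      have hχ₀ne : χ₀ ≠ χs := by
        intro h
        have := hχ₀K.2
        rw [mem_setOf_eq, h, h₂0] at this
        linarith
      have hc : 0 < ω₁ χ₀ := h₁p χ₀ hχ₀ne
      have : min s (ω₁ χ₀) ≤ g s := by
        apply le_csInf (insert_nonempty _ _)
        rintro x (rfl | ⟨χ, hχ, rfl⟩)
        · exact min_le_left _ _
        · by_cases hle : ω₁ χ ≤ s
          · exact (min_le_right _ _).trans (hχ₀min ⟨hle, hχ⟩)
          · push_neg at hle
            exact (min_le_left _ _).trans hle.le
      have : 0 < min s (ω₁ χ₀) := lt_min hs hc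
      linarith
  have hgtop : Filter.Tendsto g atTop atTop := by
    rw [tendsto_atTop]
    intro M
    obtain ⟨R, hR⟩ := hrad ω₁ h₁r M
    set R' : ℝ := max R 0 with hR'def
    obtain ⟨χm, -, hχm⟩ := (isCompact_closedBall (0 : EuclideanSpace ℝ (Fin n)) R').exists_isMaxOn
      ⟨0, Metric.mem_closedBall_self (le_max_right _ _)⟩ h₂c.continuousOn
    set N : ℝ := ω₂ χm + 1 with hNdef
    filter_upwards [eventually_ge_atTop (max M N)] with s hsM
    apply le_csInf (insert_nonempty _ _)
    rintro x (rfl | ⟨χ, hχ, rfl⟩)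
    · exact (le_max_left _ _).trans hsM
    · apply hR
      by_contra hc
      push_neg at hc
      have hball : χ ∈ Metric.closedBall (0 : EuclideanSpace ℝ (Fin n)) R' := by
        rw [Metric.mem_closedBall, dist_zero_right]
        exact hc.le.trans (le_max_left _ _)
      have h1 : ω₂ χ ≤ ω₂ χm := hχm hball
      have h2 : N ≤ s := (le_max_right _ _).trans hsM
      rw [mem_setOf_eq] at hχ
      rw [hNdef] at h2
      linarith
  -- the majorant function q
  set q : ℝ → ℝ := fun s => sSup (insert 0 (ω₁ '' {χ | ω₂ χ ≤ s})) with hqdef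
  have hbddq : ∀ s : ℝ, BddAbove (insert (0:ℝ) (ω₁ '' {χ | ω₂ χ ≤ s})) := by
    intro s
    exact (((hcpt ω₂ h₂c h₂r s).image h₁c).bddAbove).insert 0
  have hqmono : Monotone q := by
    intro a b hab
    apply csSup_le_csSup (hbddq b) (insert_nonempty _ _)
    apply insert_subset_insert
    apply image_mono
    intro χ hχ
    exact le_trans hχ hab
  have hqnn : ∀ s, 0 ≤ q s := fun s => le_csSup (hbddq s) (mem_insert _ _)
  have hq0 : q 0 = 0 := by
    apply le_antisymm _ (hqnn 0)
    apply csSup_le (insert_nonempty _ _)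
    rintro x (rfl | ⟨χ, hχ, rfl⟩)
    · exact le_refl 0
    · have hχ0 : χ = χs := by
        by_contra hne
        have := h₂p χ hne
        rw [mem_setOf_eq] at hχ
        linarith
      rw [hχ0, h₁0]
  have hqω : ∀ χ, ω₁ χ ≤ q (ω₂ χ) := fun χ =>
    le_csSup (hbddq _) (mem_insert_of_mem _ ⟨χ, Set.mem_setOf.mpr le_rfl, rfl⟩)
  have hqc : ∀ ε : ℝ, 0 < ε → ∃ δ : ℝ, 0 < δ ∧ q δ ≤ ε := by
    intro ε hε
    have hK : IsCompact ({χ | ω₂ χ ≤ 1} ∩ {χ | ε ≤ ω₁ χ}) :=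
      (hcpt ω₂ h₂c h₂r 1).inter_right (isClosed_le continuous_const h₁c)
    rcases ({χ | ω₂ χ ≤ 1} ∩ {χ | ε ≤ ω₁ χ}).eq_empty_or_nonempty with hemp | hne
    · refine ⟨1, one_pos, ?_⟩
      apply csSup_le (insert_nonempty _ _)
      rintro x (rfl | ⟨χ, hχ, rfl⟩)
      · exact hε.le
      · by_contra hc
        push_neg at hc
        rw [mem_setOf_eq] at hχ
        exact eq_empty_iff_forall_notMem.mp hemp χ ⟨hχ, hc.le⟩
    · obtain ⟨χ₀, hχ₀K, hχ₀min⟩ := hK.exists_isMinOn hne h₂c.continuousOn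
      have hχ₀ne : χ₀ ≠ χs := by
        intro h
        have := hχ₀K.2
        rw [mem_setOf_eq, h, h₁0] at this
        linarith
      have hd : 0 < ω₂ χ₀ := h₂p χ₀ hχ₀ne
      refine ⟨min (ω₂ χ₀ / 2) 1, lt_min (by linarith) one_pos, ?_⟩
      apply csSup_le (insert_nonempty _ _)
      rintro x (rfl | ⟨χ, hχ, rfl⟩)
      · exact hε.le
      · rw [mem_setOf_eq] at hχ
        by_contra hc
        push_neg at hc
        have hχK : χ ∈ {χ | ω₂ χ ≤ 1} ∩ {χ | ε ≤ ω₁ χ} :=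
          ⟨hχ.trans (min_le_right _ _), hc.le⟩
        have := hχ₀min hχK
        have h2 : ω₂ χ ≤ ω₂ χ₀ / 2 := hχ.trans (min_le_left _ _)
        exact absurd (this.trans h2) (by linarith)
  obtain ⟨ρ₁, hρ₁, hρ₁le⟩ := minorant_classKInf hgmono hg0 (fun s _ => hgle s) hgpos hgtop
  obtain ⟨ρ₂, hρ₂, hρ₂ge⟩ := majorant_classKInf hqmono hqnn hq0 hqc
  refine ⟨ρ₁, ρ₂, hρ₁, hρ₂, fun χ => ⟨?_, ?_⟩⟩
  · exact (hρ₁le (ω₂ χ) (h₂nn χ)).trans (hgω χ)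
  · exact (hqω χ).trans (hρ₂ge (ω₂ χ) (h₂nn χ))
end

section
/- If a discrete-time system χ(k+1) = f(χ(k), w(k)) on an open set 𝒮 admits a small-disturbance ISS-Lyapunov function, then it is small-disturbance input-to-state stable: there exist a size function 𝒱, d > 0 (possibly ∞), a class-KL function β, and a class-K function γ on [0,d) such that for all inputs w with ‖w‖_∞ < d and all initial states, 𝒱(χ(k)) ≤ β(𝒱(χ(0)), k) + γ(‖w‖_∞) for all k. -/
/-- A class-`K` function on `[0, d)`. -/
def IsClassKOn (d : ℝ) (γ : ℝ → ℝ) : Prop :=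
  ContinuousOn γ (Set.Ico 0 d) ∧ StrictMonoOn γ (Set.Ico 0 d) ∧ γ 0 = 0

/-- A (discrete-time) class-`KL` function `β : ℝ≥0 × ℕ → ℝ≥0`. -/
def IsClassKL (β : ℝ → ℕ → ℝ) : Prop :=
  (∀ k : ℕ, IsClassK (fun r => β r k)) ∧
  ∀ r : ℝ, 0 ≤ r → Antitone (β r) ∧ Filter.Tendsto (β r) Filter.atTop (nhds 0)

/-- A size function for `(S, χ*)`: continuous, positive definite w.r.t. `χ*`, and
coercive (it blows up along sequences approaching the boundary of `S` or with norms
tending to infinity). -/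
def IsSizeFunction {n : ℕ} (S : Set (EuclideanSpace ℝ (Fin n)))
    (χs : EuclideanSpace ℝ (Fin n)) (V : EuclideanSpace ℝ (Fin n) → ℝ) : Prop :=
  ContinuousOn V S ∧ V χs = 0 ∧ (∀ χ ∈ S, χ ≠ χs → 0 < V χ) ∧
  ∀ x : ℕ → EuclideanSpace ℝ (Fin n), (∀ k, x k ∈ S) →
    ((Sᶜ.Nonempty ∧ Filter.Tendsto (fun k => Metric.infDist (x k) Sᶜ)
        Filter.atTop (nhds 0)) ∨
      Filter.Tendsto (fun k => ‖x k‖) Filter.atTop Filter.atTop) →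
    Filter.Tendsto (fun k => V (x k)) Filter.atTop Filter.atTop


section AuxLemmas
open Filter Topology Set MeasureTheory intervalIntegral

lemma tendsto_iterate_zero {σ : ℝ → ℝ} (hcont : Continuous σ) (hle : ∀ v, σ v ≤ v)
    (hnn : ∀ v, 0 ≤ v → 0 ≤ σ v) (hlt : ∀ v, 0 < v → σ v < v) {r : ℝ} (hr : 0 ≤ r) :
    Tendsto (fun k => σ^[k] r) atTop (𝓝 0) := by
  have hpos : ∀ k, 0 ≤ σ^[k] r := by
    intro k; induction k with
    | zero => simpa using hr
    | succ k ih => rw [Function.iterate_succ_apply']; exact hnn _ ih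
  have hanti : Antitone fun k => σ^[k] r :=
    antitone_nat_of_succ_le fun k => by rw [Function.iterate_succ_apply']; exact hle _
  have hbdd : BddBelow (Set.range fun k => σ^[k] r) := ⟨0, by rintro x ⟨k, rfl⟩; exact hpos k⟩
  have hL := tendsto_atTop_ciInf hanti hbdd
  set L := ⨅ k, σ^[k] r with hLdef
  have hL0 : 0 ≤ L := le_ciInf hpos
  have h2 : Tendsto (fun k => σ^[k + 1] r) atTop (𝓝 L) := (tendsto_add_atTop_iff_nat 1).2 hL
  have h3 : Tendsto (fun k => σ (σ^[k] r)) atTop (𝓝 (σ L)) := (hcont.tendsto L).comp hL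
  have hfix : σ L = L := by
    refine tendsto_nhds_unique h3 ?_
    simpa only [← Function.iterate_succ_apply'] using h2
  rcases eq_or_lt_of_le hL0 with h | h
  · rwa [← h] at hL
  · exact absurd hfix (ne_of_lt (hlt L h))

lemma exists_decay_aux {α₂ : ℝ → ℝ} (hmono : StrictMonoOn α₂ (Set.Ici 0)) (h0 : α₂ 0 = 0) :
    ∃ a : ℝ → ℝ, Continuous a ∧ (∀ u v : ℝ, u ≤ v → a v - a u ≤ v - u) ∧
      (∀ v, 0 ≤ a v) ∧ (∀ v, 0 ≤ v → a v ≤ α₂ v) ∧ (∀ v, 0 ≤ v → a v ≤ v) ∧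
      (∀ v, 0 < v → 0 < a v) := by
  have hα₂nn : ∀ t : ℝ, 0 ≤ t → 0 ≤ α₂ t := by
    intro t ht
    rcases eq_or_lt_of_le ht with h | h
    · rw [← h, h0]
    · rw [← h0]; exact (hmono (self_mem_Ici) ht h).le
  set a : ℝ → ℝ := fun u => sInf ((fun t => α₂ t + |t - u|) '' Set.Ici 0) with ha
  have hne : ∀ u : ℝ, ((fun t => α₂ t + |t - u|) '' Set.Ici 0).Nonempty :=
    fun u => ⟨α₂ 0 + |0 - u|, mem_image_of_mem _ self_mem_Ici⟩
  have hbdd : ∀ u : ℝ, BddBelow ((fun t => α₂ t + |t - u|) '' Set.Ici 0) := by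
    intro u
    refine ⟨0, ?_⟩
    rintro x ⟨t, ht, rfl⟩
    exact add_nonneg (hα₂nn t ht) (abs_nonneg _)
  have hle : ∀ u t : ℝ, 0 ≤ t → a u ≤ α₂ t + |t - u| := by
    intro u t ht
    exact csInf_le (hbdd u) (mem_image_of_mem _ ht)
  have hnn : ∀ u, 0 ≤ a u := by
    intro u
    refine le_csInf (hne u) ?_
    rintro x ⟨t, ht, rfl⟩
    exact add_nonneg (hα₂nn t ht) (abs_nonneg _)
  have hlip : ∀ u v : ℝ, a v ≤ a u + |u - v| := by
    intro u v
    have : a v - |u - v| ≤ a u := by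
      refine le_csInf (hne u) ?_
      rintro x ⟨t, ht, rfl⟩
      have h1 : a v ≤ α₂ t + |t - v| := hle v t ht
      have h2 : |t - v| ≤ |t - u| + |u - v| := abs_sub_le t u v
      dsimp only
      linarith
    linarith
  have hcont : Continuous a := by
    have : LipschitzWith 1 a := by
      refine LipschitzWith.of_dist_le_mul fun u v => ?_
      rw [Real.dist_eq, Real.dist_eq, NNReal.coe_one, one_mul]
      have h1 := hlip u v
      have h2 := hlip v u
      rw [abs_sub_comm v u] at h2
      rw [abs_le]
      constructor <;> linarith
    exact this.continuous
  refine ⟨a, hcont, ?_, hnn, ?_, ?_, ?_⟩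
  · intro u v huv
    have := hlip u v
    rw [abs_of_nonpos (by linarith : u - v ≤ 0)] at this
    linarith
  · intro v hv
    have := hle v v hv
    simpa using this
  · intro v hv
    have := hle v 0 le_rfl
    rw [h0, zero_add, zero_sub, abs_neg, abs_of_nonneg hv] at this
    exact this
  · intro v hv
    have hbound : min (α₂ (v / 2)) (v / 2) ≤ a v := by
      refine le_csInf (hne v) ?_
      rintro x ⟨t, ht, rfl⟩
      rcases le_or_gt (v / 2) t with h | h
      · refine le_trans (min_le_left _ _) ?_
        have : α₂ (v / 2) ≤ α₂ t := by
          rcases eq_or_lt_of_le h with h' | h'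
          · rw [h']
          · exact (hmono (by positivity : (0:ℝ) ≤ v / 2) (mem_Ici.2 ht) h').le
        have := abs_nonneg (t - v)
        linarith
      · refine le_trans (min_le_right _ _) ?_
        have : |t - v| = -(t - v) := abs_of_nonpos (by linarith)
        have := hα₂nn t ht
        linarith
    have hmin : 0 < min (α₂ (v / 2)) (v / 2) := by
      refine lt_min ?_ (by linarith)
      rw [← h0]
      exact hmono self_mem_Ici (by positivity : (0:ℝ) ≤ v/2) (by linarith)
    linarith


lemma exists_classKOn_majorant {J : ℝ → ℝ} (hmono : Monotone J) (hnn : ∀ c, 0 ≤ J c)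
    (hJzero : J 0 = 0) (hsmall : ∀ ε > 0, ∃ c₀ > 0, J c₀ ≤ ε) {d : ℝ} (hd : 0 < d) :
    ∃ γ : ℝ → ℝ, IsClassKOn d γ ∧ ∀ c ∈ Set.Ico 0 d, J c ≤ γ c ∧ 0 ≤ γ c := by
  have hint : ∀ a b : ℝ, IntervalIntegrable J volume a b :=
    fun a b => (hmono.monotoneOn _).intervalIntegrable
  set F : ℝ → ℝ := fun x => ∫ t in (0:ℝ)..x, J t with hF
  have hFcont : Continuous F := intervalIntegral.continuous_primitive hint 0
  set γ : ℝ → ℝ := fun c => if c ≤ 0 then 0 else c + (F (2 * c) - F c) / c with hγ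
  -- the difference is the integral over [c, 2c]
  have hdiff : ∀ c : ℝ, F (2 * c) - F c = ∫ t in c..(2 * c), J t := by
    intro c
    exact integral_interval_sub_left (hint 0 (2 * c)) (hint 0 c)
  -- average representation
  have havg : ∀ c : ℝ, 0 < c → (F (2 * c) - F c) / c = ∫ u in (1:ℝ)..2, J (c * u) := by
    intro c hc
    rw [hdiff c, intervalIntegral.integral_comp_mul_left J hc.ne']
    rw [smul_eq_mul, mul_one, div_eq_inv_mul]
    ring_nf
  -- nonnegativity of the average
  have havg_nn : ∀ c : ℝ, 0 < c → 0 ≤ (F (2 * c) - F c) / c := by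
    intro c hc
    apply div_nonneg _ hc.le
    rw [hdiff c]
    exact intervalIntegral.integral_nonneg (by linarith) (fun u _ => hnn u)
  -- upper bound by J (2c)
  have hub : ∀ c : ℝ, 0 < c → (F (2 * c) - F c) / c ≤ J (2 * c) := by
    intro c hc
    rw [div_le_iff₀ hc, hdiff c]
    have h1 : (∫ t in c..(2 * c), J t) ≤ ∫ t in c..(2 * c), J (2 * c) := by
      refine intervalIntegral.integral_mono_on (by linarith) (hint c (2 * c))
        (intervalIntegrable_const) (fun t ht => hmono ht.2)
    rw [intervalIntegral.integral_const, smul_eq_mul] at h1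
    have h2 : (2 * c - c) * J (2 * c) = J (2 * c) * c := by ring
    linarith
  -- lower bound by J c
  have hlb : ∀ c : ℝ, 0 < c → J c ≤ (F (2 * c) - F c) / c := by
    intro c hc
    rw [le_div_iff₀ hc, hdiff c]
    have h1 : (∫ t in c..(2 * c), J c) ≤ ∫ t in c..(2 * c), J t := by
      refine intervalIntegral.integral_mono_on (by linarith) (intervalIntegrable_const)
        (hint c (2 * c)) (fun t ht => hmono ht.1)
    rw [intervalIntegral.integral_const, smul_eq_mul] at h1
    have h2 : (2 * c - c) * J c = J c * c := by ring
    linarith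
  have hγ0 : γ 0 = 0 := if_pos le_rfl
  have hγnn : ∀ c : ℝ, 0 ≤ γ c := by
    intro c
    rw [hγ]
    dsimp only
    split_ifs with h
    · exact le_rfl
    · push_neg at h
      have := havg_nn c h
      linarith
  -- monotonicity of the average via scaling
  have havg_mono : ∀ a b : ℝ, 0 < a → a ≤ b →
      (F (2 * a) - F a) / a ≤ (F (2 * b) - F b) / b := by
    intro a b ha hab
    have hb : 0 < b := lt_of_lt_of_le ha hab
    rw [havg a ha, havg b hb]
    have hia : IntervalIntegrable (fun u => J (a * u)) volume 1 2 := by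
      apply MonotoneOn.intervalIntegrable
      intro x _ y _ hxy
      exact hmono (by nlinarith)
    have hib : IntervalIntegrable (fun u => J (b * u)) volume 1 2 := by
      apply MonotoneOn.intervalIntegrable
      intro x hx y _ hxy
      have hx1 : (1:ℝ) ≤ x := by
        rcases hx with hx
        simpa [Set.uIcc_of_le (by norm_num : (1:ℝ) ≤ 2)] using hx.1
      exact hmono (by nlinarith)
    refine intervalIntegral.integral_mono_on (by norm_num) hia hib (fun u hu => ?_)
    exact hmono (by nlinarith [hu.1])
  refine ⟨γ, ⟨?_, ?_, hγ0⟩, ?_⟩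
  · -- continuity
    intro c hc
    rcases eq_or_lt_of_le hc.1 with h0 | h0
    · -- continuity at 0 within Ico 0 d, by squeeze
      rw [← h0]
      have hupper : ∀ x ∈ Set.Ico (0:ℝ) d, γ x ≤ x + J (2 * x) := by
        intro x hx
        rcases eq_or_lt_of_le hx.1 with h | h
        · rw [← h, hγ0]
          simp [hJzero]
        · rw [hγ]
          dsimp only
          rw [if_neg (not_le.2 h)]
          have := hub x h
          linarith
      have hJtend : Tendsto (fun x => x + J (2 * x)) (𝓝[Set.Ico (0:ℝ) d] 0) (𝓝 0) := by
        have h1 : Tendsto (fun x : ℝ => x) (𝓝[Set.Ico (0:ℝ) d] 0) (𝓝 0) :=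
          tendsto_id.mono_left nhdsWithin_le_nhds
        have h2 : Tendsto (fun x => J (2 * x)) (𝓝[Set.Ico (0:ℝ) d] 0) (𝓝 0) := by
          rw [Metric.tendsto_nhdsWithin_nhds]
          intro ε hε
          obtain ⟨c₀, hc₀pos, hc₀⟩ := hsmall (ε / 2) (by linarith)
          refine ⟨c₀ / 2, by linarith, ?_⟩
          intro x hx hdist
          rw [Real.dist_eq, sub_zero] at hdist ⊢
          have hx0 : 0 ≤ x := hx.1
          have : 2 * x ≤ c₀ := by
            rw [abs_of_nonneg hx0] at hdist
            linarith
          have hJx : J (2 * x) ≤ ε / 2 := le_trans (hmono this) hc₀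
          rw [abs_of_nonneg (hnn _)]
          linarith
        simpa using h1.add h2
      unfold ContinuousWithinAt
      rw [hγ0]
      refine tendsto_of_tendsto_of_tendsto_of_le_of_le'
        (tendsto_const_nhds (α := ℝ)) hJtend ?_ ?_
      · exact eventually_nhdsWithin_of_forall (fun x _ => hγnn x)
      · exact eventually_nhdsWithin_of_forall hupper
    · -- continuity at interior points c > 0
      have hca : ContinuousAt γ c := by
        have heq : (fun x : ℝ => x + (F (2 * x) - F x) / x) =ᶠ[𝓝 c] γ := by
          filter_upwards [Ioi_mem_nhds h0] with x hx
          rw [hγ]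
          dsimp only
          rw [if_neg (not_le.2 hx)]
        refine ContinuousAt.congr ?_ heq
        exact (continuousAt_id.add (((hFcont.comp (continuous_const.mul continuous_id)).sub
          hFcont).continuousAt.div continuousAt_id h0.ne'))
      exact hca.continuousWithinAt
  · -- strict monotonicity
    intro x hx y hy hxy
    rcases eq_or_lt_of_le hx.1 with h0 | h0
    · rw [← h0, hγ0]
      have hy0 : 0 < y := by rw [← h0] at hxy; exact hxy
      rw [hγ]
      dsimp only
      rw [if_neg (not_le.2 hy0)]
      have := havg_nn y hy0
      linarith
    · rw [hγ]
      dsimp only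
      rw [if_neg (not_le.2 h0), if_neg (not_le.2 (lt_trans h0 hxy))]
      have := havg_mono x y h0 hxy.le
      linarith
  · -- majorant property
    intro c hc
    refine ⟨?_, hγnn c⟩
    rcases eq_or_lt_of_le hc.1 with h0 | h0
    · rw [← h0, hJzero, hγ0]
    · rw [hγ]
      dsimp only
      rw [if_neg (not_le.2 h0)]
      have := hlb c h0
      linarith

end AuxLemmas

open Filter Topology Set MeasureTheory

/-- If the discrete-time system `χ(k+1) = f(χ(k), w(k))` on an open set `S` admits a
small-disturbance ISS-Lyapunov function, then it is small-disturbance input-to-state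
stable. -/

theorem small_disturbance_ISS_of_Lyapunov {n m : ℕ}
    (S : Set (EuclideanSpace ℝ (Fin n))) (hSopen : IsOpen S)
    (f : EuclideanSpace ℝ (Fin n) → EuclideanSpace ℝ (Fin m) → EuclideanSpace ℝ (Fin n))
    (hfcont : Continuous fun p : EuclideanSpace ℝ (Fin n) × EuclideanSpace ℝ (Fin m) =>
      f p.1 p.2)
    (hfS : ∀ ξ ∈ S, ∀ μ : EuclideanSpace ℝ (Fin m), f ξ μ ∈ S)
    (χs : EuclideanSpace ℝ (Fin n)) (hχs : χs ∈ S) (heq : f χs 0 = χs)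
    (V : EuclideanSpace ℝ (Fin n) → ℝ) (hV : IsSizeFunction S χs V)
    (α₁ α₂ : ℝ → ℝ) (hα₁ : IsClassK α₁) (hα₂ : IsClassKInf α₂)
    (hdec : ∀ ξ ∈ S, ∀ μ : EuclideanSpace ℝ (Fin m),
      ‖μ‖ ≤ α₁ (V ξ) → V (f ξ μ) - V ξ ≤ -α₂ (V ξ)) :
    ∃ (d : ℝ) (β : ℝ → ℕ → ℝ) (γ : ℝ → ℝ),
      0 < d ∧ IsClassKL β ∧ IsClassKOn d γ ∧
      ∀ (w : ℕ → EuclideanSpace ℝ (Fin m)) (c : ℝ),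
        (∀ k, ‖w k‖ ≤ c) → c < d →
        ∀ χ : ℕ → EuclideanSpace ℝ (Fin n), χ 0 ∈ S →
          (∀ k, χ (k + 1) = f (χ k) (w k)) →
          ∀ k, χ k ∈ S ∧ V (χ k) ≤ β (V (χ 0)) k + γ c := by
  classical
  obtain ⟨hVcont, hVχs, hVpos, hVcoercive⟩ := hV
  obtain ⟨hα₁cont, hα₁mono, hα₁0⟩ := hα₁
  obtain ⟨⟨hα₂cont, hα₂mono, hα₂0⟩, -⟩ := hα₂
  have hVnn : ∀ ξ ∈ S, 0 ≤ V ξ := by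
    intro ξ hξ
    by_cases hξs : ξ = χs
    · rw [hξs, hVχs]
    · exact (hVpos ξ hξ hξs).le
  have hα₁nn : ∀ v : ℝ, 0 ≤ v → 0 ≤ α₁ v := by
    intro v hv
    rcases eq_or_lt_of_le hv with h | h
    · rw [← h, hα₁0]
    · rw [← hα₁0]; exact (hα₁mono self_mem_Ici hv h).le
  set d : ℝ := α₁ 1 with hddef
  have hd : 0 < d := by
    rw [hddef, ← hα₁0]
    exact hα₁mono self_mem_Ici (by norm_num) one_pos
  -- the compact sublevel set
  set K : Set (EuclideanSpace ℝ (Fin n)) := {ξ | ξ ∈ S ∧ V ξ ≤ 1} with hKdef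
  have hKsubS : K ⊆ S := fun ξ hξ => hξ.1
  have hχsK : χs ∈ K := ⟨hχs, by rw [hVχs]; norm_num⟩
  have hKclosed : IsClosed K := by
    apply IsSeqClosed.isClosed
    intro x p hx hxp
    by_cases hpS : p ∈ S
    · refine ⟨hpS, ?_⟩
      have hcV : Tendsto (fun k => V (x k)) atTop (𝓝 (V p)) :=
        ((hVcont p hpS).continuousAt (hSopen.mem_nhds hpS)).tendsto.comp hxp
      exact le_of_tendsto hcV (Eventually.of_forall fun k => (hx k).2)
    · exfalso
      have hdist : Tendsto (fun k => Metric.infDist (x k) Sᶜ) atTop (𝓝 0) := by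
        have h1 : Tendsto (fun k => dist (x k) p) atTop (𝓝 0) :=
          tendsto_iff_dist_tendsto_zero.1 hxp
        refine tendsto_of_tendsto_of_tendsto_of_le_of_le' tendsto_const_nhds h1 ?_ ?_
        · exact Eventually.of_forall fun k => Metric.infDist_nonneg
        · exact Eventually.of_forall fun k => Metric.infDist_le_dist_of_mem hpS
      have hT := hVcoercive x (fun k => (hx k).1) (Or.inl ⟨⟨p, hpS⟩, hdist⟩)
      obtain ⟨k, hk⟩ := (hT.eventually_ge_atTop 2).exists
      linarith [(hx k).2]
  have hKbounded : Bornology.IsBounded K := by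
    by_contra hb
    have hseq : ∀ k : ℕ, ∃ ξ, ξ ∈ K ∧ (k : ℝ) ≤ ‖ξ‖ := by
      intro k
      by_contra h
      push_neg at h
      exact hb (isBounded_iff_forall_norm_le.2 ⟨k, fun ξ hξ => (h ξ hξ).le⟩)
    choose x hxK hxnorm using hseq
    have hT := hVcoercive x (fun k => (hxK k).1)
      (Or.inr (tendsto_atTop_mono hxnorm tendsto_natCast_atTop_atTop))
    obtain ⟨k, hk⟩ := (hT.eventually_ge_atTop 2).exists
    linarith [(hxK k).2]
  have hKcompact : IsCompact K := Metric.isCompact_of_isClosed_isBounded hKclosed hKbounded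
  -- the "gain" data
  set P : ℝ → ℝ → Prop := fun c ε => ∀ ξ, ξ ∈ S → V ξ ≤ 1 → α₁ (V ξ) ≤ c →
    ∀ μ : EuclideanSpace ℝ (Fin m), ‖μ‖ ≤ c → V (f ξ μ) ≤ ε with hPdef
  set A : ℝ → Set ℝ := fun c => {ε | 0 ≤ ε ∧ P c ε} with hAdef
  set J : ℝ → ℝ := fun c => sInf (A c) with hJdef
  have hAne : ∀ c : ℝ, (A c).Nonempty := by
    intro c
    rcases lt_or_ge c 0 with hc | hc
    · refine ⟨0, le_rfl, ?_⟩
      intro ξ _ _ _ μ hμ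
      exact absurd ((norm_nonneg μ).trans hμ) (not_le.2 hc)
    · set C := K ×ˢ Metric.closedBall (0 : EuclideanSpace ℝ (Fin m)) c with hCdef
      have hCcomp : IsCompact C := hKcompact.prod (isCompact_closedBall _ _)
      have hCne : C.Nonempty := ⟨(χs, 0), hχsK, by simpa using hc⟩
      have hφ : ContinuousOn (fun p : EuclideanSpace ℝ (Fin n) × EuclideanSpace ℝ (Fin m) =>
          V (f p.1 p.2)) C :=
        hVcont.comp hfcont.continuousOn (fun p hp => hfS p.1 hp.1.1 p.2)
      obtain ⟨p0, _, hmax⟩ := hCcomp.exists_isMaxOn hCne hφ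
      refine ⟨max (V (f p0.1 p0.2)) 0, le_max_right _ _, ?_⟩
      intro ξ hξ hV1 _ μ hμ
      have hmem : (ξ, μ) ∈ C := ⟨⟨hξ, hV1⟩, by
        simpa [Metric.mem_closedBall, dist_zero_right] using hμ⟩
      exact le_max_of_le_left (hmax hmem)
  have hAbdd : ∀ c : ℝ, BddBelow (A c) := fun c => ⟨0, fun ε hε => hε.1⟩
  have hJnn : ∀ c : ℝ, 0 ≤ J c := fun c => le_csInf (hAne c) fun ε hε => hε.1
  have hJP : ∀ c : ℝ, P c (J c) := by
    intro c ξ hξ h1 h2 μ hμ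
    exact le_csInf (hAne c) fun ε hε => hε.2 ξ hξ h1 h2 μ hμ
  have hJmono : Monotone J := by
    intro c c' hcc
    refine csInf_le_csInf (hAbdd c) (hAne c') ?_
    rintro ε ⟨hε0, hεP⟩
    exact ⟨hε0, fun ξ hξ h1 h2 μ hμ => hεP ξ hξ h1 (h2.trans hcc) μ (hμ.trans hcc)⟩
  have hJ0 : J 0 = 0 := by
    refine le_antisymm (csInf_le (hAbdd 0) ⟨le_rfl, ?_⟩) (hJnn 0)
    intro ξ hξ h1 h2 μ hμ
    have hμ0 : μ = 0 := norm_le_zero_iff.1 hμ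
    have hVξnn := hVnn ξ hξ
    have hVξ0 : V ξ = 0 := by
      by_contra h
      have hpos : 0 < V ξ := lt_of_le_of_ne hVξnn (Ne.symm h)
      have : α₁ 0 < α₁ (V ξ) := hα₁mono self_mem_Ici hVξnn hpos
      rw [hα₁0] at this
      linarith
    have hξχs : ξ = χs := by
      by_contra h
      exact absurd hVξ0 (ne_of_gt (hVpos ξ hξ h))
    rw [hμ0, hξχs, heq, hVχs]
  have hJsmall : ∀ ε > 0, ∃ c₀ > 0, J c₀ ≤ ε := by
    intro ε hε
    -- continuity of (ξ, μ) ↦ V (f ξ μ) at (χs, 0) with value 0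
    have hVat : ContinuousAt V (f χs 0) := by
      rw [heq]
      exact hVcont.continuousAt (hSopen.mem_nhds hχs)
    have hφat : Tendsto (fun p : EuclideanSpace ℝ (Fin n) × EuclideanSpace ℝ (Fin m) =>
        V (f p.1 p.2)) (𝓝 (χs, 0)) (𝓝 (V (f χs 0))) :=
      hVat.tendsto.comp hfcont.continuousAt
    have hval : V (f χs 0) = 0 := by rw [heq, hVχs]
    have hev : ∀ᶠ p : EuclideanSpace ℝ (Fin n) × EuclideanSpace ℝ (Fin m) in 𝓝 (χs, 0),
        V (f p.1 p.2) < ε := by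
      have h := hφat (show Set.Iio ε ∈ 𝓝 (V (f χs 0)) by rw [hval]; exact Iio_mem_nhds hε)
      exact h
    obtain ⟨δ, hδpos, hball⟩ := Metric.eventually_nhds_iff_ball.1 hev
    have hδ : ∀ ξ μ, dist ξ χs < δ → ‖μ‖ < δ → V (f ξ μ) < ε := by
      intro ξ μ h1 h2
      refine hball (ξ, μ) ?_
      simp only [Metric.mem_ball, Prod.dist_eq, dist_zero_right]
      exact max_lt h1 h2
    -- small sublevel sets are near χs
    set K' := K ∩ (Metric.ball χs δ)ᶜ with hK'def
    have hK'comp : IsCompact K' := hKcompact.inter_right Metric.isOpen_ball.isClosed_compl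
    have hKball : ∀ c₀ : ℝ, 0 < c₀ → c₀ < δ →
        (∀ ξ ∈ K', c₀ < α₁ (V ξ)) → J c₀ ≤ ε := by
      intro c₀ hc₀pos hc₀δ hK'
      refine csInf_le (hAbdd c₀) ⟨hε.le, ?_⟩
      intro ξ hξ hV1 hα₁V μ hμ
      have hξK : ξ ∈ K := ⟨hξ, hV1⟩
      have hξball : ξ ∈ Metric.ball χs δ := by
        by_contra h
        exact absurd hα₁V (not_le.2 (hK' ξ ⟨hξK, h⟩))
      exact (hδ ξ μ (Metric.mem_ball.1 hξball) (lt_of_le_of_lt hμ hc₀δ)).le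
    by_cases hK'ne : K'.Nonempty
    · obtain ⟨ξb, hξb, hminV⟩ := hK'comp.exists_isMinOn hK'ne
        (hVcont.mono (fun x hx => hKsubS hx.1))
      have hξbS : ξb ∈ S := hKsubS hξb.1
      have hξbne : ξb ≠ χs := by
        intro h
        apply hξb.2
        rw [h]
        exact Metric.mem_ball_self hδpos
      have hmpos : 0 < V ξb := hVpos ξb hξbS hξbne
      have hα₁m : 0 < α₁ (V ξb) := by
        rw [← hα₁0]
        exact hα₁mono self_mem_Ici (hVnn ξb hξbS) hmpos
      refine ⟨min (δ / 2) (α₁ (V ξb) / 2), by positivity, ?_⟩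
      refine hKball _ (by positivity) (by
        refine lt_of_le_of_lt (min_le_left _ _) (by linarith)) ?_
      intro ξ hξ
      refine lt_of_le_of_lt (min_le_right _ _) ?_
      have h1 : α₁ (V ξb) ≤ α₁ (V ξ) := by
        rcases eq_or_lt_of_le (show V ξb ≤ V ξ from hminV hξ) with h | h
        · rw [h]
        · exact (hα₁mono (hVnn ξb hξbS) (hVnn ξ (hKsubS hξ.1)) h).le
      linarith
    · refine ⟨δ / 2, by positivity, ?_⟩
      refine hKball _ (by positivity) (by linarith) ?_
      intro ξ hξ
      exact absurd ⟨ξ, hξ⟩ hK'ne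
  -- the class-K gain γ
  obtain ⟨γ, hγK, hγmaj⟩ := exists_classKOn_majorant hJmono hJnn hJ0 hJsmall hd
  -- the decay map σ
  obtain ⟨a, hacont, halip, hann, haleα, haleid, hapos⟩ := exists_decay_aux hα₂mono hα₂0
  set σ : ℝ → ℝ := fun v => v - a v with hσdef
  have hσle : ∀ v, σ v ≤ v := fun v => by simp [hσdef, hann v]
  have hσnn : ∀ v, 0 ≤ v → 0 ≤ σ v := fun v hv => by
    simp only [hσdef]; have := haleid v hv; linarith
  have hσlt : ∀ v, 0 < v → σ v < v := fun v hv => by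
    simp only [hσdef]; have := hapos v hv; linarith
  have hσmono : Monotone σ := by
    intro u v huv
    have := halip u v huv
    simp only [hσdef]
    linarith
  have hσcont : Continuous σ := continuous_id.sub hacont
  have hσ0 : σ 0 = 0 := by
    have h1 := haleα 0 le_rfl
    rw [hα₂0] at h1
    have h2 := hann 0
    simp only [hσdef]
    linarith
  have hσiter_nn : ∀ (k : ℕ) (r : ℝ), 0 ≤ r → 0 ≤ σ^[k] r := by
    intro k r hr
    induction k with
    | zero => simpa using hr
    | succ k ih => rw [Function.iterate_succ_apply']; exact hσnn _ ih
  have hσiter0 : ∀ k : ℕ, σ^[k] 0 = 0 := by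
    intro k
    induction k with
    | zero => simp
    | succ k ih => rw [Function.iterate_succ_apply', ih, hσ0]
  -- the class-KL function β
  set β : ℝ → ℕ → ℝ := fun r k => σ^[k] r + r * (1 / 2) ^ k with hβdef
  have hβKL : IsClassKL β := by
    constructor
    · intro k
      refine ⟨?_, ?_, ?_⟩
      · exact ((hσcont.iterate k).add (continuous_id.mul continuous_const)).continuousOn
      · intro x hx y hy hxy
        simp only [hβdef]
        have h1 : σ^[k] x ≤ σ^[k] y := hσmono.iterate k hxy.le
        have h2 : x * (1 / 2 : ℝ) ^ k < y * (1 / 2) ^ k := by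
          have : (0:ℝ) < (1 / 2 : ℝ) ^ k := by positivity
          exact mul_lt_mul_of_pos_right hxy this
        linarith
      · simp [hβdef, hσiter0 k]
    · intro r hr
      constructor
      · refine antitone_nat_of_succ_le fun k => ?_
        simp only [hβdef]
        have h1 : σ^[k + 1] r ≤ σ^[k] r := by
          rw [Function.iterate_succ_apply']
          exact hσle _
        have h2 : r * (1 / 2 : ℝ) ^ (k + 1) ≤ r * (1 / 2) ^ k := by
          apply mul_le_mul_of_nonneg_left _ hr
          apply pow_le_pow_of_le_one (by norm_num) (by norm_num)
          omega
        linarith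
      · have h1 : Tendsto (fun k => σ^[k] r) atTop (𝓝 0) :=
          tendsto_iterate_zero hσcont hσle hσnn hσlt hr
        have h2 : Tendsto (fun k : ℕ => r * (1 / 2 : ℝ) ^ k) atTop (𝓝 0) := by
          have := tendsto_pow_atTop_nhds_zero_of_lt_one (by norm_num : (0:ℝ) ≤ 1 / 2)
            (by norm_num : (1 / 2 : ℝ) < 1)
          simpa using this.const_mul r
        simp only [hβdef]
        simpa using h1.add h2
  refine ⟨d, β, γ, hd, hβKL, hγK, ?_⟩
  intro w c hwc hcd χ hχ0 hrec
  have hc0 : 0 ≤ c := (norm_nonneg (w 0)).trans (hwc 0)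
  obtain ⟨hJγ, hγnn⟩ := hγmaj c ⟨hc0, hcd⟩
  have key : ∀ k, χ k ∈ S ∧ V (χ k) ≤ max (σ^[k] (V (χ 0))) (J c) := by
    intro k
    induction k with
    | zero => exact ⟨hχ0, by simp⟩
    | succ k ih =>
      obtain ⟨hkS, hkV⟩ := ih
      have hnextS : χ (k + 1) ∈ S := by rw [hrec k]; exact hfS _ hkS _
      refine ⟨hnextS, ?_⟩
      by_cases hcase : ‖w k‖ ≤ α₁ (V (χ k))
      · have hdec' := hdec (χ k) hkS (w k) hcase
        have h1 : V (χ (k + 1)) ≤ σ (V (χ k)) := by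
          rw [hrec k]
          have := haleα (V (χ k)) (hVnn _ hkS)
          simp only [hσdef]
          linarith
        have h2 : σ (V (χ k)) ≤ max (σ^[k + 1] (V (χ 0))) (J c) := by
          refine le_trans (hσmono hkV) ?_
          rw [hσmono.map_max]
          apply max_le
          · rw [Function.iterate_succ_apply']
            exact le_max_left _ _
          · exact le_max_of_le_right ((hσle _).trans le_rfl)
        exact h1.trans h2
      · push_neg at hcase
        have hα₁c : α₁ (V (χ k)) ≤ c := hcase.le.trans (hwc k)
        have hV1 : V (χ k) ≤ 1 := by
          by_contra h
          push_neg at h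
          have : α₁ 1 < α₁ (V (χ k)) :=
            hα₁mono (by norm_num) (mem_Ici.2 (by linarith [hVnn _ hkS])) h
          rw [← hddef] at this
          linarith
        have := hJP c (χ k) hkS hV1 hα₁c (w k) (hwc k)
        rw [← hrec k] at this
        exact le_max_of_le_right this
  intro k
  refine ⟨(key k).1, ?_⟩
  have h1 := (key k).2
  have hV00 : 0 ≤ V (χ 0) := hVnn _ hχ0
  have hβnn : 0 ≤ β (V (χ 0)) k := by
    simp only [hβdef]
    have := hσiter_nn k _ hV00
    positivity
  have hβge : σ^[k] (V (χ 0)) ≤ β (V (χ 0)) k := by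
    simp only [hβdef]
    have : 0 ≤ V (χ 0) * (1 / 2 : ℝ) ^ k := by positivity
    linarith
  refine le_trans h1 (max_le ?_ ?_)
  · linarith
  · linarith
end

section
/- A size function 𝒱 is a small-disturbance ISS-Lyapunov function for χ(k+1) = f(χ(k), w(k)) (implication form: there exist α₁ ∈ K and α₂ ∈ K∞ with 𝒱(f(ξ,μ)) − 𝒱(ξ) ≤ −α₂(𝒱(ξ)) whenever ‖μ‖ ≤ α₁(𝒱(ξ))) if and only if there exist a class-K∞ function α₂, some d > 0 (possibly ∞), and a class-K function α₃ on [0,d) such that 𝒱(f(ξ,μ)) − 𝒱(ξ) ≤ −α₂(𝒱(ξ)) + α₃(‖μ‖) for all μ with ‖μ‖ < d. -/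
open Filter Set

lemma sizeFun_nonneg {n : ℕ} {S : Set (EuclideanSpace ℝ (Fin n))}
    {χs : EuclideanSpace ℝ (Fin n)} {V : EuclideanSpace ℝ (Fin n) → ℝ}
    (hV : IsSizeFunction S χs V) : ∀ ξ ∈ S, 0 ≤ V ξ := by
  intro ξ hξ
  by_cases h : ξ = χs
  · simp [h, hV.2.1]
  · exact (hV.2.2.1 ξ hξ h).le

lemma sublevel_compact {n : ℕ} {S : Set (EuclideanSpace ℝ (Fin n))} (hSopen : IsOpen S)
    {χs : EuclideanSpace ℝ (Fin n)} {V : EuclideanSpace ℝ (Fin n) → ℝ}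
    (hV : IsSizeFunction S χs V) (c : ℝ) :
    IsCompact {ξ | ξ ∈ S ∧ V ξ ≤ c} := by
  rw [Metric.isCompact_iff_isClosed_bounded]
  constructor
  · apply IsSeqClosed.isClosed
    intro x a hx hxa
    by_cases haS : a ∈ S
    · refine ⟨haS, ?_⟩
      have hca : ContinuousAt V a := hV.1.continuousAt (hSopen.mem_nhds haS)
      exact le_of_tendsto (hca.tendsto.comp hxa) (Filter.Eventually.of_forall fun k => (hx k).2)
    · exfalso
      have hdist : Tendsto (fun k => dist (x k) a) atTop (nhds 0) :=
        tendsto_iff_dist_tendsto_zero.mp hxa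
      have hinf : Tendsto (fun k => Metric.infDist (x k) Sᶜ) atTop (nhds 0) :=
        squeeze_zero (fun k => Metric.infDist_nonneg)
          (fun k => Metric.infDist_le_dist_of_mem haS) hdist
      have h1 : Tendsto (fun k => V (x k)) atTop atTop :=
        hV.2.2.2 x (fun k => (hx k).1) (Or.inl ⟨⟨a, haS⟩, hinf⟩)
      obtain ⟨k, hk⟩ := (h1.eventually_gt_atTop c).exists
      exact absurd (hx k).2 (not_le.mpr hk)
  · by_contra hb
    rw [isBounded_iff_forall_norm_le] at hb
    push_neg at hb
    choose x hx hnx using fun k : ℕ => hb (k : ℝ)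
    have h1 : Tendsto (fun k => V (x k)) atTop atTop :=
      hV.2.2.2 x (fun k => (hx k).1)
        (Or.inr (tendsto_atTop_mono (fun k => (hnx k).le) tendsto_natCast_atTop_atTop))
    obtain ⟨k, hk⟩ := (h1.eventually_gt_atTop c).exists
    exact absurd (hx k).2 (not_le.mpr hk)

lemma classKOn_extend {d : ℝ} {γ : ℝ → ℝ} (hd : 0 < d) (hγ : IsClassKOn d γ) :
    ∃ A : ℝ → ℝ, StrictMono A ∧ Continuous A ∧ Function.Surjective A ∧
      ∀ t ∈ Set.Icc 0 (d/2), A t = γ t := by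
  set c := d / 2 with hc
  have hc0 : 0 < c := by positivity
  have hcd : c < d := by simp [hc]; linarith
  set A : ℝ → ℝ := fun t => γ (min (max t 0) c) + max (t - c) 0 + min t 0 with hA
  have hclamp : ∀ t, min (max t 0) c ∈ Set.Icc (0:ℝ) c := fun t =>
    ⟨le_min (le_max_right t 0) hc0.le, min_le_right _ _⟩
  have hIccsub : Set.Icc (0:ℝ) c ⊆ Set.Ico 0 d := fun x hx => ⟨hx.1, lt_of_le_of_lt hx.2 hcd⟩
  have hAeq : ∀ t ∈ Set.Icc 0 c, A t = γ t := by
    intro t ht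
    simp only [hA]
    rw [max_eq_left ht.1, min_eq_left ht.2, max_eq_right (by linarith [ht.2]), min_eq_right ht.1]
    ring
  have hmono1 : Monotone fun t => γ (min (max t 0) c) := by
    intro a b hab
    exact hγ.2.1.monotoneOn (hIccsub (hclamp a)) (hIccsub (hclamp b))
      (min_le_min (max_le_max hab le_rfl) le_rfl)
  have hAmono : StrictMono A := by
    intro a b hab
    simp only [hA]
    rcases lt_or_ge a 0 with ha | ha
    · have h3 : min a 0 < min b 0 := by
        rcases le_or_gt b 0 with hb | hb
        · rw [min_eq_left ha.le, min_eq_left hb]; exact hab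
        · rw [min_eq_left ha.le, min_eq_right hb.le]; exact ha
      have h2 : max (a - c) 0 ≤ max (b - c) 0 := max_le_max (by linarith) le_rfl
      have h1 := hmono1 hab.le
      linarith
    · rcases lt_or_ge a c with hac | hac
      · have h1 : γ (min (max a 0) c) < γ (min (max b 0) c) := by
          apply hγ.2.1 (hIccsub (hclamp a)) (hIccsub (hclamp b))
          rw [max_eq_left ha, min_eq_left hac.le]
          rcases le_or_gt b c with hbc | hbc
          · rw [max_eq_left (by linarith), min_eq_left hbc]; exact hab
          · rw [max_eq_left (by linarith), min_eq_right hbc.le]; exact hac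
        have h2 : max (a - c) 0 ≤ max (b - c) 0 := max_le_max (by linarith) le_rfl
        have h3 : min a 0 ≤ min b 0 := min_le_min hab.le le_rfl
        linarith
      · have h2 : max (a - c) 0 < max (b - c) 0 := by
          rw [max_eq_left (by linarith), max_eq_left (by linarith)]; linarith
        have h1 := hmono1 hab.le
        have h3 : min a 0 ≤ min b 0 := min_le_min hab.le le_rfl
        linarith
  have hAcont : Continuous A := by
    have hclampc : Continuous fun t : ℝ => min (max t 0) c :=
      (continuous_id.max continuous_const).min continuous_const
    have h1 : Continuous fun t => γ (min (max t 0) c) :=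
      (hγ.1.mono hIccsub).comp_continuous hclampc hclamp
    exact (h1.add ((continuous_id.sub continuous_const).max continuous_const)).add
      (continuous_id.min continuous_const)
  have hA0 : A 0 = 0 := by
    have := hAeq 0 ⟨le_rfl, hc0.le⟩
    rw [this, hγ.2.2]
  have hAsurj : Function.Surjective A := by
    apply hAcont.surjective
    · refine tendsto_atTop_mono' atTop (f₁ := fun t => t - c) ?_ ?_
      · filter_upwards [eventually_ge_atTop (0:ℝ)] with t ht
        have h1 : 0 ≤ γ (min (max t 0) c) := by
          have h2 := hγ.2.1.monotoneOn (hIccsub ⟨le_rfl, hc0.le⟩) (hIccsub (hclamp t)) (hclamp t).1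
          rwa [hγ.2.2] at h2
        have h3 : min t 0 = 0 := min_eq_right ht
        simp only [hA]
        rw [h3]
        have := le_max_left (t - c) 0
        linarith
      · exact tendsto_atTop_add_const_right atTop (-c) tendsto_id
    · apply Tendsto.congr' (f₁ := fun t : ℝ => t)
      · filter_upwards [eventually_le_atBot (0:ℝ)] with t ht
        simp only [hA]
        rw [max_eq_right ht, min_eq_left hc0.le, hγ.2.2, max_eq_right (by linarith),
          min_eq_left ht]
        ring
      · exact tendsto_id
  exact ⟨A, hAmono, hAcont, hAsurj, fun t ht => hAeq t ht⟩

lemma rev_main {n m : ℕ} {S : Set (EuclideanSpace ℝ (Fin n))}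
    {f : EuclideanSpace ℝ (Fin n) → EuclideanSpace ℝ (Fin m) → EuclideanSpace ℝ (Fin n)}
    {χs : EuclideanSpace ℝ (Fin n)}
    {V : EuclideanSpace ℝ (Fin n) → ℝ} (hV : IsSizeFunction S χs V)
    (α₂ : ℝ → ℝ) (d : ℝ) (α₃ : ℝ → ℝ) (h2 : IsClassKInf α₂) (hd : 0 < d)
    (h3 : IsClassKOn d α₃)
    (H : ∀ ξ ∈ S, ∀ μ : EuclideanSpace ℝ (Fin m),
      ‖μ‖ < d → V (f ξ μ) - V ξ ≤ -α₂ (V ξ) + α₃ ‖μ‖) :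
    ∃ α₁ α₂' : ℝ → ℝ, IsClassK α₁ ∧ IsClassKInf α₂' ∧
      ∀ ξ ∈ S, ∀ μ : EuclideanSpace ℝ (Fin m),
        ‖μ‖ ≤ α₁ (V ξ) → V (f ξ μ) - V ξ ≤ -α₂' (V ξ) := by
  obtain ⟨A, hAmono, hAcont, hAsurj, hAeq⟩ := classKOn_extend hd h3
  set c := d / 2 with hc
  have hc0 : 0 < c := by positivity
  have hcd : c < d := by rw [hc]; linarith
  set E := StrictMono.orderIsoOfSurjective A hAmono hAsurj with hE
  have hEapp : ∀ x, E x = A x := fun x => by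
    rw [hE, StrictMono.coe_orderIsoOfSurjective]
  have hEsA : ∀ x, E.symm (A x) = x := fun x => by
    rw [← hEapp]; exact E.symm_apply_apply x
  have hA0 : A 0 = 0 := by rw [hAeq 0 ⟨le_rfl, hc0.le⟩, h3.2.2]
  set L := α₃ c with hL
  have hL0 : 0 < L := by
    rw [hL, ← h3.2.2]
    exact h3.2.1 ⟨le_rfl, hd⟩ ⟨hc0.le, hcd⟩ hc0
  have hALc : A c = L := by rw [hAeq c ⟨hc0.le, le_rfl⟩]
  -- θ facts
  set θ : ℝ → ℝ := fun s => L * s / (L + s) with hθ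
  have hden : ∀ s : ℝ, 0 ≤ s → 0 < L + s := fun s hs => by linarith
  have hθnn : ∀ s, 0 ≤ s → 0 ≤ θ s := fun s hs =>
    div_nonneg (mul_nonneg hL0.le hs) (hden s hs).le
  have hθltL : ∀ s, 0 ≤ s → θ s < L := by
    intro s hs
    rw [hθ, div_lt_iff₀ (hden s hs)]
    nlinarith
  have hθle : ∀ s, 0 ≤ s → θ s ≤ s := by
    intro s hs
    rw [hθ, div_le_iff₀ (hden s hs)]
    nlinarith
  have hθmono : ∀ s t, 0 ≤ s → 0 ≤ t → s < t → θ s < θ t := by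
    intro s t hs ht hst
    rw [hθ, div_lt_div_iff₀ (hden s hs) (hden t ht)]
    nlinarith [mul_lt_mul_of_pos_left hst (mul_pos hL0 hL0)]
  have h2nn : ∀ s, 0 ≤ s → 0 ≤ α₂ s := by
    intro s hs
    rcases eq_or_lt_of_le hs with h | h
    · simp [← h, h2.1.2.2]
    · rw [← h2.1.2.2]
      exact (h2.1.2.1 Set.self_mem_Ici hs h).le
  set α₁ : ℝ → ℝ := fun s => E.symm (θ (α₂ s / 2)) with hα₁
  have hynn : ∀ s, 0 ≤ s → 0 ≤ θ (α₂ s / 2) := fun s hs =>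
    hθnn _ (by linarith [h2nn s hs])
  have hyltL : ∀ s, 0 ≤ s → θ (α₂ s / 2) < L := fun s hs =>
    hθltL _ (by linarith [h2nn s hs])
  have hα₁mem : ∀ s, 0 ≤ s → 0 ≤ α₁ s ∧ α₁ s < c := by
    intro s hs
    constructor
    · have h := E.symm.monotone (show A 0 ≤ θ (α₂ s / 2) by rw [hA0]; exact hynn s hs)
      rwa [hEsA] at h
    · have h := E.symm.strictMono (show θ (α₂ s / 2) < A c by rw [hALc]; exact hyltL s hs)
      rwa [hEsA] at h
  have hα₁eq : ∀ s, 0 ≤ s → α₃ (α₁ s) = θ (α₂ s / 2) := by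
    intro s hs
    rw [← hAeq (α₁ s) ⟨(hα₁mem s hs).1, (hα₁mem s hs).2.le⟩, hα₁]
    rw [← hEapp]
    exact E.apply_symm_apply _
  have hα₁0 : α₁ 0 = 0 := by
    have hθ0 : θ (α₂ 0 / 2) = 0 := by
      rw [h2.1.2.2, hθ]; simp
    show E.symm (θ (α₂ 0 / 2)) = 0
    rw [hθ0]
    have h := hEsA 0
    rwa [hA0] at h
  have hα₁K : IsClassK α₁ := by
    refine ⟨?_, ?_, hα₁0⟩
    · apply Continuous.comp_continuousOn (OrderIso.continuous E.symm)
      exact (continuousOn_const.mul (h2.1.1.div_const 2)).div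
        (continuousOn_const.add (h2.1.1.div_const 2))
        (fun s hs => (hden _ (by linarith [h2nn s hs])).ne')
    · intro a ha b hb hab
      apply E.symm.strictMono
      apply hθmono _ _ (by linarith [h2nn a ha]) (by linarith [h2nn b hb])
      linarith [h2.1.2.1 ha hb hab]
  refine ⟨α₁, fun s => α₂ s / 2, hα₁K, ⟨⟨h2.1.1.div_const 2, ?_, by simp [h2.1.2.2]⟩,
    h2.2.atTop_div_const two_pos⟩, ?_⟩
  · intro a ha b hb hab
    have := h2.1.2.1 ha hb hab
    linarith
  · intro ξ hξ μ hμ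
    have hs : 0 ≤ V ξ := sizeFun_nonneg hV ξ hξ
    have hmemc := hα₁mem (V ξ) hs
    have hμnn : (0:ℝ) ≤ ‖μ‖ := norm_nonneg μ
    have hμd : ‖μ‖ < d := by linarith [hμ.trans hmemc.2.le]
    have hH := H ξ hξ μ hμd
    have hmono3 : α₃ ‖μ‖ ≤ α₃ (α₁ (V ξ)) :=
      h3.2.1.monotoneOn ⟨hμnn, hμd⟩ ⟨hmemc.1, hmemc.2.trans hcd⟩ hμ
    have hkey : α₃ (α₁ (V ξ)) ≤ α₂ (V ξ) / 2 := by
      rw [hα₁eq (V ξ) hs]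
      exact hθle _ (by linarith [h2nn (V ξ) hs])
    linarith

lemma classK_nonneg {α : ℝ → ℝ} (h : IsClassK α) : ∀ s, 0 ≤ s → 0 ≤ α s := by
  intro s hs
  rcases eq_or_lt_of_le hs with h' | h'
  · simp [← h', h.2.2]
  · rw [← h.2.2]
    exact (h.2.1 Set.self_mem_Ici hs h').le

lemma fwd_main {n m : ℕ} {S : Set (EuclideanSpace ℝ (Fin n))} (hSopen : IsOpen S)
    {f : EuclideanSpace ℝ (Fin n) → EuclideanSpace ℝ (Fin m) → EuclideanSpace ℝ (Fin n)}
    (hfcont : Continuous fun p : EuclideanSpace ℝ (Fin n) × EuclideanSpace ℝ (Fin m) =>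
      f p.1 p.2)
    (hfS : ∀ ξ ∈ S, ∀ μ : EuclideanSpace ℝ (Fin m), f ξ μ ∈ S)
    {χs : EuclideanSpace ℝ (Fin n)} (hχs : χs ∈ S) (heq : f χs 0 = χs)
    {V : EuclideanSpace ℝ (Fin n) → ℝ} (hV : IsSizeFunction S χs V)
    (α₁ α₂ : ℝ → ℝ) (h1 : IsClassK α₁) (h2 : IsClassKInf α₂)
    (H : ∀ ξ ∈ S, ∀ μ : EuclideanSpace ℝ (Fin m),
      ‖μ‖ ≤ α₁ (V ξ) → V (f ξ μ) - V ξ ≤ -α₂ (V ξ)) :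
    ∃ (α₂' : ℝ → ℝ) (d : ℝ) (α₃ : ℝ → ℝ), IsClassKInf α₂' ∧ 0 < d ∧ IsClassKOn d α₃ ∧
      ∀ ξ ∈ S, ∀ μ : EuclideanSpace ℝ (Fin m),
        ‖μ‖ < d → V (f ξ μ) - V ξ ≤ -α₂' (V ξ) + α₃ ‖μ‖ := by
  have hVnn := sizeFun_nonneg hV
  have h1nn := classK_nonneg h1
  set d := α₁ 1 with hddef
  have hd : 0 < d := by
    rw [hddef, ← h1.2.2]
    exact h1.2.1 Set.self_mem_Ici (Set.mem_Ici.mpr zero_le_one) one_pos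
  set K := {ξ | ξ ∈ S ∧ V ξ ≤ 1} with hKdef
  have hK : IsCompact K := sublevel_compact hSopen hV 1
  set W : EuclideanSpace ℝ (Fin n) × EuclideanSpace ℝ (Fin m) → ℝ :=
    fun p => V (f p.1 p.2) + α₂ (V p.1) with hWdef
  have hWcont : ContinuousOn W {p : EuclideanSpace ℝ (Fin n) × EuclideanSpace ℝ (Fin m) |
      p.1 ∈ S} := by
    apply ContinuousOn.add
    · exact hV.1.comp hfcont.continuousOn (fun p hp => hfS p.1 hp p.2)
    · exact h2.1.1.comp (hV.1.comp continuous_fst.continuousOn (fun p hp => hp))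
        (fun p hp => hVnn p.1 hp)
  set Feas : ℝ → Set (EuclideanSpace ℝ (Fin n) × EuclideanSpace ℝ (Fin m)) :=
    fun r => {p | p.1 ∈ S ∧ V p.1 ≤ 1 ∧ α₁ (V p.1) ≤ r ∧ ‖p.2‖ ≤ r} with hFeasdef
  have hFeasKB : ∀ r : ℝ, Feas r ⊆ K ×ˢ Metric.closedBall 0 (max r 0) := by
    intro r p hp
    refine ⟨⟨hp.1, hp.2.1⟩, ?_⟩
    rw [Metric.mem_closedBall, dist_zero_right]
    exact hp.2.2.2.trans (le_max_left _ _)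
  have hcptKB : ∀ r : ℝ,
      IsCompact (K ×ˢ Metric.closedBall (0 : EuclideanSpace ℝ (Fin m)) (max r 0)) :=
    fun r => hK.prod (isCompact_closedBall _ _)
  have hbdd : ∀ r, BddAbove (W '' Feas r) := fun r =>
    BddAbove.mono (Set.image_mono (f := W) (hFeasKB r))
      ((hcptKB r).bddAbove_image (hWcont.mono (fun p hp => hp.1.1)))
  have hfeas0 : ∀ r, 0 ≤ r →
      ((χs, 0) : EuclideanSpace ℝ (Fin n) × EuclideanSpace ℝ (Fin m)) ∈ Feas r := by
    intro r hr
    refine ⟨hχs, ?_, ?_, by simpa using hr⟩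
    · rw [hV.2.1]; exact zero_le_one
    · rw [hV.2.1, h1.2.2]; exact hr
  have hW0 : W ((χs, 0)) = 0 := by
    simp only [hWdef]
    rw [heq, hV.2.1, h2.1.2.2]
    ring
  set G : ℝ → ℝ := fun r => sSup (W '' Feas r) with hGdef
  have hGfeas : ∀ r, ∀ p ∈ Feas r, W p ≤ G r := fun r p hp =>
    le_csSup (hbdd r) (Set.mem_image_of_mem W hp)
  have hGnn : ∀ r, 0 ≤ r → 0 ≤ G r := fun r hr => hW0 ▸ hGfeas r _ (hfeas0 r hr)
  have hVzero : ∀ ξ ∈ S, α₁ (V ξ) ≤ 0 → ξ = χs := by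
    intro ξ hξ hle
    by_contra h
    have hpos := hV.2.2.1 ξ hξ h
    have h' := h1.2.1 Set.self_mem_Ici (Set.mem_Ici.mpr (hVnn ξ hξ)) hpos
    rw [h1.2.2] at h'
    linarith
  have hGneg : ∀ r, r < 0 → G r = 0 := by
    intro r hr
    have hempty : Feas r = ∅ := by
      rw [Set.eq_empty_iff_forall_notMem]
      intro p hp
      linarith [norm_nonneg p.2, hp.2.2.2]
    simp [hGdef, hempty, Real.sSup_empty]
  have hGmono : Monotone G := by
    intro a b hab
    rcases le_or_gt 0 a with ha | ha
    · apply csSup_le_csSup (hbdd b) ((Set.nonempty_of_mem (hfeas0 a ha)).image W)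
      exact Set.image_mono (f := W)
        (fun p hp => ⟨hp.1, hp.2.1, hp.2.2.1.trans hab, hp.2.2.2.trans hab⟩)
    · rw [hGneg a ha]
      rcases lt_or_ge b 0 with hb | hb
      · rw [hGneg b hb]
      · exact hGnn b hb
  have hG0 : G 0 = 0 := by
    apply le_antisymm _ (hGnn 0 le_rfl)
    apply Real.sSup_le _ le_rfl
    rintro x ⟨p, hp, rfl⟩
    have hμ0 : p.2 = 0 := norm_le_zero_iff.mp hp.2.2.2
    have hξ : p.1 = χs := hVzero p.1 hp.1 hp.2.2.1
    have hpeq : p = ((χs, 0) :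
        EuclideanSpace ℝ (Fin n) × EuclideanSpace ℝ (Fin m)) := Prod.ext hξ hμ0
    rw [hpeq, hW0]
  have hGsmall : ∀ ε, 0 < ε → ∃ δ, 0 < δ ∧ ∀ r, 0 ≤ r → r ≤ d → r < δ → G r ≤ ε := by
    intro ε hε
    set B := Metric.closedBall (0 : EuclideanSpace ℝ (Fin m)) d with hBdef
    set KB := K ×ˢ B with hKBdef
    have hKBcpt : IsCompact KB := hK.prod (isCompact_closedBall _ _)
    have hWKB : ContinuousOn W KB := hWcont.mono (fun p hp => hp.1.1)
    set C := KB ∩ W ⁻¹' (Set.Ici ε) with hCdef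
    have hCclosed : IsClosed C :=
      hWKB.preimage_isClosed_of_isClosed hKBcpt.isClosed isClosed_Ici
    have hCcpt : IsCompact C := hKBcpt.of_isClosed_subset hCclosed Set.inter_subset_left
    have hsub : ∀ r, 0 ≤ r → r ≤ d → Feas r ⊆ KB := by
      intro r hr0 hrd p hp
      refine ⟨⟨hp.1, hp.2.1⟩, ?_⟩
      rw [hBdef, Metric.mem_closedBall, dist_zero_right]
      exact hp.2.2.2.trans hrd
    rcases C.eq_empty_or_nonempty with hC | hC
    · refine ⟨1, one_pos, fun r hr0 hrd _ => ?_⟩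
      apply Real.sSup_le _ hε.le
      rintro x ⟨p, hp, rfl⟩
      by_contra hx
      push_neg at hx
      have hmem : p ∈ C := ⟨hsub r hr0 hrd hp, hx.le⟩
      rw [hC] at hmem
      exact hmem
    · set ρ : EuclideanSpace ℝ (Fin n) × EuclideanSpace ℝ (Fin m) → ℝ :=
        fun p => max (α₁ (V p.1)) ‖p.2‖ with hρdef
      have hρS : ContinuousOn ρ {p : EuclideanSpace ℝ (Fin n) × EuclideanSpace ℝ (Fin m) |
          p.1 ∈ S} := by
        apply ContinuousOn.sup
        · exact h1.1.comp (hV.1.comp continuous_fst.continuousOn (fun p hp => hp))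
            (fun p hp => hVnn p.1 hp)
        · exact continuous_snd.norm.continuousOn
      have hρcont : ContinuousOn ρ C := hρS.mono (fun p hp => hp.1.1.1)
      obtain ⟨p₀, hp₀C, hp₀min⟩ := hCcpt.exists_isMinOn hC hρcont
      refine ⟨ρ p₀, ?_, ?_⟩
      · rcases lt_or_ge 0 (ρ p₀) with h | h
        · exact h
        exfalso
        have hα : α₁ (V p₀.1) ≤ 0 := le_trans (le_max_left _ _) h
        have hn : ‖p₀.2‖ ≤ 0 := le_trans (le_max_right _ _) h
        have hξ : p₀.1 = χs := hVzero p₀.1 hp₀C.1.1.1 hα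
        have hμ : p₀.2 = 0 := norm_le_zero_iff.mp hn
        have hpeq : p₀ = ((χs, 0) :
            EuclideanSpace ℝ (Fin n) × EuclideanSpace ℝ (Fin m)) := Prod.ext hξ hμ
        have hεle : ε ≤ W p₀ := hp₀C.2
        rw [hpeq, hW0] at hεle
        linarith
      · intro r hr0 hrd hrδ
        apply Real.sSup_le _ hε.le
        rintro x ⟨p, hp, rfl⟩
        by_contra hx
        push_neg at hx
        have hpC : p ∈ C := ⟨hsub r hr0 hrd hp, hx.le⟩
        have hm1 : ρ p₀ ≤ ρ p := hp₀min hpC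
        have hm2 : ρ p ≤ r := max_le hp.2.2.1 hp.2.2.2
        linarith
  -- the integral construction
  have hint : ∀ a b : ℝ, IntervalIntegrable G MeasureTheory.volume a b :=
    fun a b => (hGmono.monotoneOn _).intervalIntegrable
  set d₃ := d / 2 with hd₃def
  have hd₃ : 0 < d₃ := by positivity
  have hd₃d : d₃ < d := by rw [hd₃def]; linarith
  set α₃ : ℝ → ℝ := fun r => r + ∫ t in (1:ℝ)..2, G (r * t) with hα₃def
  have hintr : ∀ r : ℝ, 0 ≤ r →
      IntervalIntegrable (fun t => G (r * t)) MeasureTheory.volume 1 2 := by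
    intro r hr
    apply MonotoneOn.intervalIntegrable
    intro x _ y _ hxy
    exact hGmono (mul_le_mul_of_nonneg_left hxy hr)
  have hα₃0 : α₃ 0 = 0 := by
    show (0:ℝ) + ∫ t in (1:ℝ)..2, G (0 * t) = 0
    simp [hG0]
  have hα₃mono : StrictMonoOn α₃ (Set.Ico 0 d₃) := by
    intro a ha b hb hab
    have hb0 : (0:ℝ) ≤ b := ha.1.trans hab.le
    have hI : (∫ t in (1:ℝ)..2, G (a * t)) ≤ ∫ t in (1:ℝ)..2, G (b * t) := by
      apply intervalIntegral.integral_mono_on one_le_two (hintr a ha.1) (hintr b hb0)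
      intro t ht
      exact hGmono (mul_le_mul_of_nonneg_right hab.le (by linarith [ht.1]))
    simp only [hα₃def]
    linarith
  have hα₃geG : ∀ r, 0 ≤ r → G r ≤ α₃ r := by
    intro r hr
    have hI : (∫ _ in (1:ℝ)..2, G r) ≤ ∫ t in (1:ℝ)..2, G (r * t) := by
      apply intervalIntegral.integral_mono_on one_le_two intervalIntegrable_const (hintr r hr)
      intro t ht
      exact hGmono (by nlinarith [ht.1])
    rw [intervalIntegral.integral_const] at hI
    norm_num at hI
    simp only [hα₃def]
    linarith
  have hα₃le2 : ∀ r, 0 ≤ r → α₃ r ≤ r + G (2 * r) := by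
    intro r hr
    have hI : (∫ t in (1:ℝ)..2, G (r * t)) ≤ ∫ _ in (1:ℝ)..2, G (2 * r) := by
      apply intervalIntegral.integral_mono_on one_le_two (hintr r hr) intervalIntegrable_const
      intro t ht
      exact hGmono (by nlinarith [ht.2])
    rw [intervalIntegral.integral_const] at hI
    norm_num at hI
    simp only [hα₃def]
    linarith
  have hα₃nn : ∀ r, 0 ≤ r → 0 ≤ α₃ r := fun r hr => (hGnn r hr).trans (hα₃geG r hr)
  set Hp : ℝ → ℝ := fun x => ∫ u in (0:ℝ)..x, G u with hHpdef
  have hHpcont : Continuous Hp := intervalIntegral.continuous_primitive hint 0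
  have hid : ∀ r : ℝ, 0 < r → α₃ r = r + r⁻¹ * (Hp (r * 2) - Hp (r * 1)) := by
    intro r hr
    have h1' := intervalIntegral.integral_comp_mul_left (a := (1:ℝ)) (b := (2:ℝ))
      (fun u => G u) hr.ne'
    have h2' : (∫ x in (r*1)..(r*2), G x) = Hp (r * 2) - Hp (r * 1) :=
      (intervalIntegral.integral_interval_sub_left (hint 0 (r*2)) (hint 0 (r*1))).symm
    simp only [hα₃def]
    rw [h1', h2', smul_eq_mul]
  have hα₃cont : ContinuousOn α₃ (Set.Ico 0 d₃) := by
    intro r hr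
    rcases eq_or_lt_of_le hr.1 with h0 | h0
    · rw [← h0]
      show Filter.Tendsto α₃ (nhdsWithin 0 (Set.Ico 0 d₃)) (nhds (α₃ 0))
      rw [hα₃0]
      apply squeeze_zero'
      · filter_upwards [self_mem_nhdsWithin] with x hx using hα₃nn x hx.1
      · filter_upwards [self_mem_nhdsWithin] with x hx using hα₃le2 x hx.1
      · have hxt : Filter.Tendsto (fun x : ℝ => x) (nhdsWithin 0 (Set.Ico 0 d₃)) (nhds 0) :=
          (continuous_id.continuousWithinAt : ContinuousWithinAt id (Set.Ico 0 d₃) 0)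
        have hGt : Filter.Tendsto (fun x : ℝ => G (2 * x))
            (nhdsWithin 0 (Set.Ico 0 d₃)) (nhds 0) := by
          rw [Metric.tendsto_nhdsWithin_nhds]
          intro ε hε
          obtain ⟨δ, hδ, hδ'⟩ := hGsmall (ε/2) (by positivity)
          refine ⟨min (δ/2) d₃, by positivity, fun x hx hdist => ?_⟩
          rw [Real.dist_eq, sub_zero, abs_of_nonneg hx.1] at hdist
          have hxδ : x < δ/2 := lt_of_lt_of_le hdist (min_le_left _ _)
          have hb := hδ' (2*x) (by linarith [hx.1]) (by linarith [hx.2]) (by linarith)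
          rw [Real.dist_eq, sub_zero, abs_of_nonneg (hGnn _ (by linarith [hx.1]))]
          linarith
        have := hxt.add hGt
        simpa using this
    · apply ContinuousAt.continuousWithinAt
      have hev : (fun x : ℝ => x + x⁻¹ * (Hp (x * 2) - Hp (x * 1))) =ᶠ[nhds r] α₃ := by
        filter_upwards [eventually_gt_nhds h0] with x hx
        rw [hid x hx]
      apply ContinuousAt.congr _ hev
      have c2 : ContinuousAt (fun x : ℝ => Hp (x * 2)) r :=
        (hHpcont.comp (continuous_id.mul continuous_const)).continuousAt
      have c3 : ContinuousAt (fun x : ℝ => Hp (x * 1)) r :=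
        (hHpcont.comp (continuous_id.mul continuous_const)).continuousAt
      exact continuousAt_id.add ((continuousAt_inv₀ h0.ne').mul (c2.sub c3))
  refine ⟨α₂, d₃, α₃, h2, hd₃, ⟨hα₃cont, hα₃mono, hα₃0⟩, ?_⟩
  intro ξ hξ μ hμ
  have hVn := hVnn ξ hξ
  rcases le_or_gt ‖μ‖ (α₁ (V ξ)) with hcase | hcase
  · have hH := H ξ hξ μ hcase
    have h0 := hα₃nn ‖μ‖ (norm_nonneg μ)
    linarith
  · have hV1 : V ξ ≤ 1 := by
      by_contra hVg
      push_neg at hVg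
      have hm : α₁ 1 ≤ α₁ (V ξ) :=
        h1.2.1.monotoneOn (Set.mem_Ici.mpr zero_le_one) (Set.mem_Ici.mpr hVn) hVg.le
      rw [← hddef] at hm
      linarith
    have hfeas : ((ξ, μ) : EuclideanSpace ℝ (Fin n) × EuclideanSpace ℝ (Fin m)) ∈
        Feas ‖μ‖ := ⟨hξ, hV1, hcase.le, le_rfl⟩
    have hWb := hGfeas ‖μ‖ _ hfeas
    have hGb := hα₃geG ‖μ‖ (norm_nonneg μ)
    simp only [hWdef] at hWb
    linarith

/-- "Implication form" and "dissipation form" characterizations of a small-disturbance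
ISS-Lyapunov function are equivalent: a size function `V` satisfies
`V(f(ξ,μ)) − V(ξ) ≤ −α₂(V(ξ))` whenever `‖μ‖ ≤ α₁(V(ξ))` (for some `α₁ ∈ K`, `α₂ ∈ K∞`)
iff there exist `α₂ ∈ K∞`, `d > 0`, and `α₃ ∈ K_{[0,d)}` with
`V(f(ξ,μ)) − V(ξ) ≤ −α₂(V(ξ)) + α₃(‖μ‖)` for all `μ` with `‖μ‖ < d`. -/
theorem small_disturbance_Lyapunov_dissipation_iff {n m : ℕ}
    (S : Set (EuclideanSpace ℝ (Fin n))) (hSopen : IsOpen S)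
    (f : EuclideanSpace ℝ (Fin n) → EuclideanSpace ℝ (Fin m) → EuclideanSpace ℝ (Fin n))
    (hfcont : Continuous fun p : EuclideanSpace ℝ (Fin n) × EuclideanSpace ℝ (Fin m) =>
      f p.1 p.2)
    (hfS : ∀ ξ ∈ S, ∀ μ : EuclideanSpace ℝ (Fin m), f ξ μ ∈ S)
    (χs : EuclideanSpace ℝ (Fin n)) (hχs : χs ∈ S) (heq : f χs 0 = χs)
    (V : EuclideanSpace ℝ (Fin n) → ℝ) (hV : IsSizeFunction S χs V) :
    (∃ α₁ α₂ : ℝ → ℝ, IsClassK α₁ ∧ IsClassKInf α₂ ∧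
      ∀ ξ ∈ S, ∀ μ : EuclideanSpace ℝ (Fin m),
        ‖μ‖ ≤ α₁ (V ξ) → V (f ξ μ) - V ξ ≤ -α₂ (V ξ)) ↔
    (∃ (α₂ : ℝ → ℝ) (d : ℝ) (α₃ : ℝ → ℝ), IsClassKInf α₂ ∧ 0 < d ∧ IsClassKOn d α₃ ∧
      ∀ ξ ∈ S, ∀ μ : EuclideanSpace ℝ (Fin m),
        ‖μ‖ < d → V (f ξ μ) - V ξ ≤ -α₂ (V ξ) + α₃ ‖μ‖) := by
  constructor
  · rintro ⟨α₁, α₂, h1, h2, H⟩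
    exact fwd_main hSopen hfcont hfS hχs heq hV α₁ α₂ h1 h2 H
  · rintro ⟨α₂, d, α₃, h2, hd, h3, H⟩
    exact rev_main hV α₂ d α₃ h2 hd h3 H
end

section
/- Let 𝒥(z) = (z−z*)²/(2(z−1)) on 𝒵 = (1, ∞) with z* = 1 + √2. Then for all z ∈ (1,∞), |𝒥'(z)| ≥ 𝒥(z)/(√2/2 + 2𝒥(z)). -/
/-- For `𝒥(z) = (z−z*)²/(2(z−1))` on `(1,∞)` with `z* = 1+√2`, the `K`-PL estimate
`|𝒥'(z)| ≥ 𝒥(z)/(√2/2 + 2𝒥(z))` holds for all `z ∈ (1,∞)`. -/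
theorem example_KPL_estimate :
    ∀ z : ℝ, 1 < z →
      ((z - (1 + Real.sqrt 2)) ^ 2 / (2 * (z - 1))) /
          (Real.sqrt 2 / 2 + 2 * ((z - (1 + Real.sqrt 2)) ^ 2 / (2 * (z - 1)))) ≤
        |deriv (fun z : ℝ => (z - (1 + Real.sqrt 2)) ^ 2 / (2 * (z - 1))) z| := by
  intro z hz
  set s : ℝ := Real.sqrt 2 with hsdef
  have hs2 : s ^ 2 = 2 := Real.sq_sqrt (by norm_num)
  have hs0 : 0 < s := Real.sqrt_pos.mpr (by norm_num)
  have ha : 0 < z - 1 := by linarith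
  set a : ℝ := z - 1 with hadef
  have hane : a ≠ 0 := ne_of_gt ha
  -- derivative
  have hderiv : HasDerivAt (fun z : ℝ => (z - (1 + s)) ^ 2 / (2 * (z - 1)))
      ((z - (1 + s)) * (z - 1 + s) / (2 * (z - 1) ^ 2)) z := by
    have h1 : HasDerivAt (fun z : ℝ => (z - (1 + s)) ^ 2) (2 * (z - (1 + s))) z := by
      have : HasDerivAt (fun z : ℝ => z - (1 + s)) 1 z :=
        (hasDerivAt_id z).sub_const _
      simpa using (this.fun_pow 2)
    have h2 : HasDerivAt (fun z : ℝ => 2 * (z - 1)) 2 z := by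
      have : HasDerivAt (fun z : ℝ => z - 1) 1 z := (hasDerivAt_id z).sub_const _
      simpa using this.const_mul 2
    have hne : 2 * (z - 1) ≠ 0 := by positivity
    have := h1.fun_div h2 hne
    refine this.congr_deriv ?_
    field_simp
    ring
  rw [hderiv.deriv]
  have habs : |(z - (1 + s)) * (z - 1 + s) / (2 * (z - 1) ^ 2)|
      = |z - (1 + s)| * (z - 1 + s) / (2 * (z - 1) ^ 2) := by
    rw [abs_div, abs_mul, abs_of_pos (by nlinarith : (0:ℝ) < z - 1 + s),
      abs_of_pos (by positivity : (0:ℝ) < 2 * (z - 1) ^ 2)]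
  rw [habs]
  set t : ℝ := |z - (1 + s)| with htdef
  have ht0 : 0 ≤ t := abs_nonneg _
  have ht2 : t ^ 2 = (z - (1 + s)) ^ 2 := sq_abs _
  have hzs : z - (1 + s) = a - s := by simp [hadef]; ring
  have hz1s : z - 1 + s = a + s := by simp [hadef]
  rw [← ht2, hz1s]
  show t ^ 2 / (2 * a) / (s / 2 + 2 * (t ^ 2 / (2 * a))) ≤ t * (a + s) / (2 * a ^ 2)
  have hden : 0 < s * a + 2 * t ^ 2 := by positivity
  have hden2 : 0 < s / 2 + 2 * (t ^ 2 / (2 * a)) := by positivity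
  have e1 : t ^ 2 / (2 * a) / (s / 2 + 2 * (t ^ 2 / (2 * a)))
      = t ^ 2 / (s * a + 2 * t ^ 2) := by
    rw [div_div]
    congr 1
    field_simp
  rw [e1]
  have main : 2 * a ^ 2 * t ≤ (a + s) * (s * a + 2 * t ^ 2) := by
    have habs' : t = |a - s| := by rw [htdef, hzs]
    rcases le_total s a with h | h
    · have : t = a - s := by rw [habs', abs_of_nonneg (by linarith)]
      rw [this]; nlinarith [sq_nonneg (a - s), sq_nonneg a, mul_pos ha hs0]
    · have : t = s - a := by rw [habs', abs_of_nonpos (by linarith)]; ring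
      rw [this]; nlinarith [sq_nonneg (s - a), sq_nonneg (s - 2*a), mul_pos ha hs0,
        mul_nonneg (mul_nonneg ha.le ha.le) (sub_nonneg.mpr h)]
  rw [div_le_div_iff₀ hden (by positivity)]
  have := mul_le_mul_of_nonneg_left main ht0
  nlinarith [this]
end

section
/- Let 𝒥₂(K) = Tr(P_K), where P_K solves (A−BK)ᵀP_K + P_K(A−BK) + Q + KᵀRK = 0 for K ∈ 𝒢. Then for every K ∈ 𝒢, ‖K‖ ≤ (2‖B‖/λ_min(R))·𝒥₂(K) + (2‖A‖/λ_min(R))^{1/2}·𝒥₂(K)^{1/2}. -/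
open Matrix
open scoped Matrix.Norms.L2Operator RealInnerProductSpace

/-- A real square matrix is Hurwitz if all of its (complex) eigenvalues have
strictly negative real part. -/
def Hurwitz {n : ℕ} (A : Matrix (Fin n) (Fin n) ℝ) : Prop :=
  ∀ μ ∈ spectrum ℂ (A.map (Complex.ofReal)), μ.re < 0

variable {k : ℕ}

lemma inner_symm_dot (x : EuclideanSpace ℝ (Fin k)) (w : Fin k → ℝ) :
    ⟪x, (WithLp.equiv 2 _).symm w⟫ = (⇑x : Fin k → ℝ) ⬝ᵥ w := by
  simp [PiLp.inner_apply, dotProduct, mul_comm]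

lemma repr_mulVec {M : Matrix (Fin k) (Fin k) ℝ} (hM : M.IsHermitian) (v : Fin k → ℝ) (i : Fin k) :
    hM.eigenvectorBasis.repr ((WithLp.equiv 2 _).symm (M *ᵥ v)) i =
      hM.eigenvalues i * hM.eigenvectorBasis.repr ((WithLp.equiv 2 _).symm v) i := by
  rw [OrthonormalBasis.repr_apply_apply, OrthonormalBasis.repr_apply_apply,
    inner_symm_dot, inner_symm_dot, dotProduct_mulVec]
  have hsym : vecMul (⇑(hM.eigenvectorBasis i)) M = M *ᵥ ⇑(hM.eigenvectorBasis i) := by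
    have hT : Mᵀ = M := by rw [← conjTranspose_eq_transpose_of_trivial]; exact hM
    rw [← mulVec_transpose, hT]
  rw [hsym, hM.mulVec_eigenvectorBasis, smul_dotProduct, smul_eq_mul]

lemma dot_expand {M : Matrix (Fin k) (Fin k) ℝ} (hM : M.IsHermitian) (u w : Fin k → ℝ) :
    u ⬝ᵥ w = ∑ i, hM.eigenvectorBasis.repr ((WithLp.equiv 2 _).symm u) i *
      hM.eigenvectorBasis.repr ((WithLp.equiv 2 _).symm w) i := by
  have h : u ⬝ᵥ w = ⟪(WithLp.equiv 2 _).symm u, (WithLp.equiv 2 (Fin k → ℝ)).symm w⟫ := by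
    simp [PiLp.inner_apply, dotProduct, mul_comm]
  rw [h, ← LinearIsometryEquiv.inner_map_map hM.eigenvectorBasis.repr]
  simp only [PiLp.inner_apply, RCLike.inner_apply, conj_trivial, mul_comm]

lemma quad_lower {M : Matrix (Fin k) (Fin k) ℝ} (hM : M.IsHermitian) (v : Fin k → ℝ) :
    (⨅ i, hM.eigenvalues i) * (v ⬝ᵥ v) ≤ v ⬝ᵥ (M *ᵥ v) := by
  rw [dot_expand hM v v, dot_expand hM v (M *ᵥ v)]
  simp_rw [repr_mulVec hM, Finset.mul_sum]
  apply Finset.sum_le_sum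
  intro i _
  have h1 : (⨅ j, hM.eigenvalues j) ≤ hM.eigenvalues i :=
    ciInf_le (Finite.bddBelow_range _) i
  nlinarith [sq_nonneg (hM.eigenvectorBasis.repr ((WithLp.equiv 2 _).symm v) i)]

lemma trace_eq_sum_eig {M : Matrix (Fin k) (Fin k) ℝ} (hM : M.IsHermitian) :
    M.trace = ∑ i, hM.eigenvalues i := by
  conv_lhs => rw [hM.spectral_theorem, Unitary.conjStarAlgAut_apply]
  rw [trace_mul_cycle]
  have h1 : (star (hM.eigenvectorUnitary : Matrix (Fin k) (Fin k) ℝ)) *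
      (hM.eigenvectorUnitary : Matrix (Fin k) (Fin k) ℝ) = 1 := by
    exact Unitary.coe_star_mul_self hM.eigenvectorUnitary
  rw [h1, one_mul, trace_diagonal]
  simp

lemma quad_sq_upper {M : Matrix (Fin k) (Fin k) ℝ} (hM : M.PosSemidef) (v : Fin k → ℝ) :
    (M *ᵥ v) ⬝ᵥ (M *ᵥ v) ≤ (M.trace)^2 * (v ⬝ᵥ v) := by
  rw [dot_expand hM.1 (M *ᵥ v) (M *ᵥ v), dot_expand hM.1 v v]
  simp_rw [repr_mulVec hM.1, Finset.mul_sum]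
  apply Finset.sum_le_sum
  intro i _
  have h0 : 0 ≤ hM.1.eigenvalues i := hM.eigenvalues_nonneg i
  have h1 : hM.1.eigenvalues i ≤ M.trace := by
    rw [trace_eq_sum_eig hM.1]
    exact Finset.single_le_sum (fun j _ => hM.eigenvalues_nonneg j) (Finset.mem_univ i)
  nlinarith [sq_nonneg (hM.1.eigenvectorBasis.repr ((WithLp.equiv 2 _).symm v) i),
    mul_le_mul h1 h1 h0 (le_trans h0 h1)]

lemma norm_symm_sq (u : Fin k → ℝ) :
    ‖(WithLp.equiv 2 (Fin k → ℝ)).symm u‖ ^ 2 = u ⬝ᵥ u := by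
  rw [EuclideanSpace.norm_sq_eq]
  simp [dotProduct, sq]

lemma dot_le_norms (u w : Fin k → ℝ) :
    u ⬝ᵥ w ≤ ‖(WithLp.equiv 2 (Fin k → ℝ)).symm u‖ * ‖(WithLp.equiv 2 (Fin k → ℝ)).symm w‖ := by
  have h : u ⬝ᵥ w = ⟪(WithLp.equiv 2 (Fin k → ℝ)).symm u, (WithLp.equiv 2 (Fin k → ℝ)).symm w⟫ := by
    simp [PiLp.inner_apply, dotProduct, mul_comm]
  rw [h]
  exact real_inner_le_norm _ _

lemma mulVec_norm_le {j : ℕ} (M : Matrix (Fin j) (Fin k) ℝ) (v : Fin k → ℝ) :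
    ‖(WithLp.equiv 2 (Fin j → ℝ)).symm (M *ᵥ v)‖ ≤ ‖M‖ * ‖(WithLp.equiv 2 (Fin k → ℝ)).symm v‖ :=
  by have := M.l2_opNorm_mulVec ((WithLp.equiv 2 (Fin k → ℝ)).symm v); exact this

lemma quad_root_bound {t c d : ℝ} (ht : 0 ≤ t) (hc : 0 ≤ c) (hd : 0 ≤ d)
    (h : t ^ 2 ≤ c * t + d) : t ≤ c + Real.sqrt d := by
  by_contra hcon
  push_neg at hcon
  nlinarith [Real.sq_sqrt hd, Real.sqrt_nonneg d]


/-- For any stabilizing gain `K`, with `𝒥₂(K) = Tr(P_K)` where `P_K` solves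
`(A−BK)ᵀP_K + P_K(A−BK) + Q + KᵀRK = 0`, one has
`‖K‖ ≤ (2‖B‖/λ_min(R))·𝒥₂(K) + (2‖A‖/λ_min(R))^{1/2}·𝒥₂(K)^{1/2}`
(spectral norms). -/
theorem gain_norm_bound {n m : ℕ} [NeZero n] [NeZero m]
    (A : Matrix (Fin n) (Fin n) ℝ) (B : Matrix (Fin n) (Fin m) ℝ)
    (K : Matrix (Fin m) (Fin n) ℝ)
    (Q : Matrix (Fin n) (Fin n) ℝ) (R : Matrix (Fin m) (Fin m) ℝ)
    (hQ : Q.PosDef) (hR : R.PosDef) (hK : Hurwitz (A - B * K))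
    (P : Matrix (Fin n) (Fin n) ℝ) (hP : P.PosDef)
    (hPeq : (A - B * K)ᵀ * P + P * (A - B * K) + Q + Kᵀ * R * K = 0) :
    ‖K‖ ≤ (2 * ‖B‖ / (⨅ i, hR.1.eigenvalues i)) * P.trace +
      Real.sqrt (2 * ‖A‖ / (⨅ i, hR.1.eigenvalues i)) * Real.sqrt P.trace := by
  classical
  set lam := ⨅ i, hR.1.eigenvalues i with hlamdef
  have hlam : 0 < lam := by
    obtain ⟨i, hi⟩ := exists_eq_ciInf_of_finite (f := hR.1.eigenvalues)
    rw [hlamdef, ← hi]; exact hR.eigenvalues_pos i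
  have htr : 0 < P.trace := by
    rw [trace_eq_sum_eig hP.1]
    exact Finset.sum_pos (fun i _ => hP.eigenvalues_pos i) Finset.univ_nonempty
  have hC : 0 ≤ 2 * ‖B‖ / lam * P.trace + Real.sqrt (2 * ‖A‖ / lam) * Real.sqrt P.trace :=
    add_nonneg (mul_nonneg (div_nonneg (by positivity) hlam.le) htr.le)
      (mul_nonneg (Real.sqrt_nonneg _) (Real.sqrt_nonneg _))
  rw [Matrix.l2_opNorm_def]
  apply ContinuousLinearMap.opNorm_le_of_unit_norm hC
  intro x hx
  set v : Fin n → ℝ := WithLp.equiv 2 (Fin n → ℝ) x with hv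
  have hxv : x = (WithLp.equiv 2 (Fin n → ℝ)).symm v := (Equiv.symm_apply_apply _ _).symm
  have happ : ((Matrix.toEuclideanLin.trans LinearMap.toContinuousLinearMap) K) x
      = (WithLp.equiv 2 (Fin m → ℝ)).symm (K *ᵥ v) := by
    apply (WithLp.equiv 2 (Fin m → ℝ)).injective
    rw [Equiv.apply_symm_apply]
    rfl
  rw [happ]
  set t := ‖(WithLp.equiv 2 (Fin m → ℝ)).symm (K *ᵥ v)‖ with htdef
  have ht0 : 0 ≤ t := norm_nonneg _
  have hv1 : ‖(WithLp.equiv 2 (Fin n → ℝ)).symm v‖ = 1 := by rw [← hxv]; exact hx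
  have hvv : v ⬝ᵥ v = 1 := by rw [← norm_symm_sq, hv1]; norm_num
  -- bound on ‖P *ᵥ v‖
  have hPw : ‖(WithLp.equiv 2 (Fin n → ℝ)).symm (P *ᵥ v)‖ ≤ P.trace := by
    have h1 := quad_sq_upper hP.posSemidef v
    rw [hvv, mul_one] at h1
    have h2 : ‖(WithLp.equiv 2 (Fin n → ℝ)).symm (P *ᵥ v)‖ ^ 2 ≤ P.trace ^ 2 := by
      rw [norm_symm_sq]; exact h1
    nlinarith [norm_nonneg ((WithLp.equiv 2 (Fin n → ℝ)).symm (P *ᵥ v))]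
  have hAv : ‖(WithLp.equiv 2 (Fin n → ℝ)).symm (A *ᵥ v)‖ ≤ ‖A‖ := by
    have h := mulVec_norm_le A v
    rwa [hv1, mul_one] at h
  have hBu : ‖(WithLp.equiv 2 (Fin n → ℝ)).symm (B *ᵥ (K *ᵥ v))‖ ≤ ‖B‖ * t :=
    mulVec_norm_le B (K *ᵥ v)
  have hZ : Kᵀ * R * K = -((A - B * K)ᵀ * P + P * (A - B * K) + Q) :=
    eq_neg_of_add_eq_zero_right hPeq
  have hPT : Pᵀ = P := by
    rw [← Matrix.conjTranspose_eq_transpose_of_trivial]; exact hP.1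
  have hkey : lam * t ^ 2 ≤ 2 * ‖A‖ * P.trace + 2 * (‖B‖ * t) * P.trace := by
    have h1 : lam * ((K *ᵥ v) ⬝ᵥ (K *ᵥ v)) ≤ (K *ᵥ v) ⬝ᵥ (R *ᵥ (K *ᵥ v)) := quad_lower hR.1 _
    have h2 : (K *ᵥ v) ⬝ᵥ (R *ᵥ (K *ᵥ v)) = v ⬝ᵥ ((Kᵀ * R * K) *ᵥ v) := by
      rw [← mulVec_mulVec, ← mulVec_mulVec, dotProduct_mulVec v, vecMul_transpose]
    have h3 : v ⬝ᵥ ((Kᵀ * R * K) *ᵥ v)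
        = -(((A - B * K) *ᵥ v) ⬝ᵥ (P *ᵥ v)) - (P *ᵥ v) ⬝ᵥ ((A - B * K) *ᵥ v)
          - v ⬝ᵥ (Q *ᵥ v) := by
      rw [hZ]
      simp only [neg_mulVec, add_mulVec, dotProduct_neg, dotProduct_add]
      have e1 : v ⬝ᵥ (((A - B * K)ᵀ * P) *ᵥ v) = ((A - B * K) *ᵥ v) ⬝ᵥ (P *ᵥ v) := by
        rw [← mulVec_mulVec, dotProduct_mulVec v, vecMul_transpose]
      have e2 : v ⬝ᵥ ((P * (A - B * K)) *ᵥ v) = (P *ᵥ v) ⬝ᵥ ((A - B * K) *ᵥ v) := by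
        rw [← mulVec_mulVec, dotProduct_mulVec v]
        congr 1
        rw [← mulVec_transpose, hPT]
      rw [e1, e2]; ring
    have hQ0 : 0 ≤ v ⬝ᵥ (Q *ᵥ v) := by
      have := hQ.posSemidef.dotProduct_mulVec_nonneg v
      simpa using this
    -- split (A - B*K) *ᵥ v
    have hsplit : (A - B * K) *ᵥ v = A *ᵥ v - B *ᵥ (K *ᵥ v) := by
      rw [sub_mulVec, mulVec_mulVec]
    have cs1 : -((A *ᵥ v) ⬝ᵥ (P *ᵥ v))
        ≤ ‖(WithLp.equiv 2 (Fin n → ℝ)).symm (A *ᵥ v)‖ *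
          ‖(WithLp.equiv 2 (Fin n → ℝ)).symm (P *ᵥ v)‖ := by
      have h := dot_le_norms (-(A *ᵥ v)) (P *ᵥ v)
      simpa [neg_dotProduct] using h
    have cs2 : (B *ᵥ (K *ᵥ v)) ⬝ᵥ (P *ᵥ v)
        ≤ ‖(WithLp.equiv 2 (Fin n → ℝ)).symm (B *ᵥ (K *ᵥ v))‖ *
          ‖(WithLp.equiv 2 (Fin n → ℝ)).symm (P *ᵥ v)‖ := dot_le_norms _ _
    have cs3 : -((P *ᵥ v) ⬝ᵥ (A *ᵥ v))
        ≤ ‖(WithLp.equiv 2 (Fin n → ℝ)).symm (A *ᵥ v)‖ *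
          ‖(WithLp.equiv 2 (Fin n → ℝ)).symm (P *ᵥ v)‖ := by
      have h := dot_le_norms (-(A *ᵥ v)) (P *ᵥ v)
      rw [neg_dotProduct] at h
      rw [dotProduct_comm]
      simpa using h
    have cs4 : (P *ᵥ v) ⬝ᵥ (B *ᵥ (K *ᵥ v))
        ≤ ‖(WithLp.equiv 2 (Fin n → ℝ)).symm (B *ᵥ (K *ᵥ v))‖ *
          ‖(WithLp.equiv 2 (Fin n → ℝ)).symm (P *ᵥ v)‖ := by
      rw [dotProduct_comm]; exact dot_le_norms _ _
    have m1 : ‖(WithLp.equiv 2 (Fin n → ℝ)).symm (A *ᵥ v)‖ *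
        ‖(WithLp.equiv 2 (Fin n → ℝ)).symm (P *ᵥ v)‖ ≤ ‖A‖ * P.trace :=
      mul_le_mul hAv hPw (norm_nonneg _) (norm_nonneg _)
    have m2 : ‖(WithLp.equiv 2 (Fin n → ℝ)).symm (B *ᵥ (K *ᵥ v))‖ *
        ‖(WithLp.equiv 2 (Fin n → ℝ)).symm (P *ᵥ v)‖ ≤ ‖B‖ * t * P.trace :=
      mul_le_mul hBu hPw (norm_nonneg _) (by positivity)
    have htt : (K *ᵥ v) ⬝ᵥ (K *ᵥ v) = t ^ 2 := by rw [htdef, norm_symm_sq]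
    rw [htt] at h1
    rw [h2, h3, hsplit] at h1
    simp only [sub_dotProduct, dotProduct_sub] at h1
    linarith
  -- solve the quadratic inequality
  have hquad : t ^ 2 ≤ (2 * ‖B‖ * P.trace / lam) * t + 2 * ‖A‖ * P.trace / lam := by
    rw [div_mul_eq_mul_div, ← add_div, le_div_iff₀ hlam]
    nlinarith [hkey]
  have hroot := quad_root_bound ht0
    (c := 2 * ‖B‖ * P.trace / lam) (d := 2 * ‖A‖ * P.trace / lam)
    (by positivity) (by positivity) hquad
  have hc : 2 * ‖B‖ * P.trace / lam = 2 * ‖B‖ / lam * P.trace := by ring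
  have hd : 2 * ‖A‖ * P.trace / lam = (2 * ‖A‖ / lam) * P.trace := by ring
  rw [hc, hd, Real.sqrt_mul (div_nonneg (by positivity) hlam.le)] at hroot
  exact hroot
end

section
/- For any stabilizing gain K ∈ 𝒢, with K₊ = R⁻¹Bᵀ P_K, the identity 2⟨K−K*, R(K−K₊)⟩_{Y*} = Tr(P_K − P*) + ⟨K−K*, R(K−K*)⟩_{Y*} holds, where ⟨M,N⟩_{Y*} = Tr(M Y* Nᵀ). -/
open Matrix

lemma rot4 {l p q s : Type*} [Fintype l] [Fintype p] [Fintype q] [Fintype s]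
    (W : Matrix l p ℝ) (X : Matrix p q ℝ) (Y : Matrix q s ℝ) (Z : Matrix s l ℝ) :
    (W * (X * (Y * Z))).trace = (X * (Y * (Z * W))).trace := by
  rw [trace_mul_comm]; simp only [Matrix.mul_assoc]

lemma trans4 {l p q s : Type*} [Fintype l] [Fintype p] [Fintype q] [Fintype s]
    (W : Matrix l p ℝ) (X : Matrix p q ℝ) (Y : Matrix q s ℝ) (Z : Matrix s l ℝ) :
    (W * (X * (Y * Z))).trace = (Zᵀ * (Yᵀ * (Xᵀ * Wᵀ))).trace := by
  conv_lhs => rw [← trace_transpose]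
  simp only [Matrix.transpose_mul, Matrix.mul_assoc]

/-- For any stabilizing gain `K`, with `K₊ = R⁻¹Bᵀ P_K`, the identity
`2⟨K−K*, R(K−K₊)⟩_{Y*} = Tr(P_K − P*) + ⟨K−K*, R(K−K*)⟩_{Y*}` holds,
where `⟨M,N⟩_{Y*} = Tr(M Y* Nᵀ)`. -/
theorem natural_gradient_trace_identity {n m : ℕ}
    (A : Matrix (Fin n) (Fin n) ℝ) (B : Matrix (Fin n) (Fin m) ℝ)
    (Q : Matrix (Fin n) (Fin n) ℝ) (R : Matrix (Fin m) (Fin m) ℝ)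
    (hQ : Q.PosDef) (hR : R.PosDef)
    (Ps : Matrix (Fin n) (Fin n) ℝ) (hPs : Ps.PosDef)
    (hARE : Aᵀ * Ps + Ps * A + Q - Ps * B * R⁻¹ * Bᵀ * Ps = 0)
    (Ks : Matrix (Fin m) (Fin n) ℝ) (hKs : Ks = R⁻¹ * Bᵀ * Ps)
    (hKsHur : Hurwitz (A - B * Ks))
    (Ys : Matrix (Fin n) (Fin n) ℝ) (hYs : Ys.PosDef)
    (hYseq : (A - B * Ks) * Ys + Ys * (A - B * Ks)ᵀ + 1 = 0)
    (K : Matrix (Fin m) (Fin n) ℝ) (hK : Hurwitz (A - B * K))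
    (PK : Matrix (Fin n) (Fin n) ℝ) (hPK : PK.PosDef)
    (hPKeq : (A - B * K)ᵀ * PK + PK * (A - B * K) + Q + Kᵀ * R * K = 0) :
    2 * ((K - Ks) * Ys * (R * (K - R⁻¹ * Bᵀ * PK))ᵀ).trace =
      (PK - Ps).trace + ((K - Ks) * Ys * (R * (K - Ks))ᵀ).trace := by
  have hRt : Rᵀ = R := by
    have h := hR.isHermitian
    rwa [Matrix.IsHermitian, conjTranspose_eq_transpose_of_trivial] at h
  have hPKt : PKᵀ = PK := by
    have h := hPK.isHermitian
    rwa [Matrix.IsHermitian, conjTranspose_eq_transpose_of_trivial] at h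
  have hPst : Psᵀ = Ps := by
    have h := hPs.isHermitian
    rwa [Matrix.IsHermitian, conjTranspose_eq_transpose_of_trivial] at h
  have hYst : Ysᵀ = Ys := by
    have h := hYs.isHermitian
    rwa [Matrix.IsHermitian, conjTranspose_eq_transpose_of_trivial] at h
  have hRdet : IsUnit R.det := hR.det_pos.ne'.isUnit
  have hRinv : R * R⁻¹ = 1 := Matrix.mul_nonsing_inv R hRdet
  -- R * (R⁻¹ * X) = X style cancellations
  have hcancel : ∀ X : Matrix (Fin m) (Fin n) ℝ, R * (R⁻¹ * X) = X := fun X => by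
    rw [← Matrix.mul_assoc, hRinv, Matrix.one_mul]
  have hBPs : Bᵀ * Ps = R * Ks := by
    rw [hKs, Matrix.mul_assoc R⁻¹, hcancel]
  have hPsB : Ps * B = Ksᵀ * R := by
    have h := congrArg Matrix.transpose hBPs
    rwa [Matrix.transpose_mul, Matrix.transpose_mul, Matrix.transpose_transpose, hPst, hRt] at h
  have hmid : Ps * B * R⁻¹ * Bᵀ * Ps = Ksᵀ * R * Ks := by
    rw [hPsB, Matrix.mul_assoc Ksᵀ, hRinv, Matrix.mul_one, Matrix.mul_assoc, hBPs,
      ← Matrix.mul_assoc]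
  have hARE' : Aᵀ * Ps + Ps * A + Q - Ksᵀ * R * Ks = 0 := by
    rw [← hmid]; exact hARE
  -- Lyapunov equation for PK - Ps in closed loop A - B*Ks
  have hM : (A - B * Ks)ᵀ * (PK - Ps) + (PK - Ps) * (A - B * Ks)
      = -(Kᵀ * R * K) + Ksᵀ * R * Ks + (K - Ks)ᵀ * (Bᵀ * PK) + PK * (B * (K - Ks)) := by
    have hBPs2 : Ksᵀ * (Bᵀ * Ps) = Ksᵀ * (R * Ks) := by rw [hBPs]
    have hPsB2 : Ps * B * Ks = Ksᵀ * R * Ks := by rw [hPsB]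
    simp only [Matrix.transpose_sub, Matrix.transpose_mul] at hPKeq ⊢
    linear_combination (norm :=
      (simp only [sub_mul, mul_sub, add_mul, mul_add, neg_mul, mul_neg, smul_mul_assoc,
         mul_smul_comm, neg_smul, one_smul, neg_neg, Matrix.mul_assoc,
         Matrix.sub_mul, Matrix.mul_sub, Matrix.add_mul, Matrix.mul_add, Matrix.neg_mul,
         Matrix.mul_neg, Matrix.smul_mul, Matrix.mul_smul];
       abel)) hPKeq - hARE' + hBPs2 + hPsB2
  have h1 : (1 : Matrix (Fin n) (Fin n) ℝ) = -((A - B * Ks) * Ys + Ys * (A - B * Ks)ᵀ) := by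
    linear_combination (norm := noncomm_ring) hYseq
  have htr : (PK - Ps).trace
      = -(((A - B * Ks)ᵀ * (PK - Ps) + (PK - Ps) * (A - B * Ks)) * Ys).trace := by
    conv_lhs => rw [← mul_one (PK - Ps), h1]
    simp only [mul_neg, mul_add, add_mul, trace_neg, trace_add, Matrix.mul_assoc]
    rw [trace_mul_comm ((A - B * Ks)ᵀ) ((PK - Ps) * Ys), Matrix.mul_assoc]
    ring
  have hT1 : (R * (K - R⁻¹ * Bᵀ * PK))ᵀ = Kᵀ * R - PK * B := by
    rw [Matrix.mul_assoc R⁻¹, Matrix.mul_sub, hcancel, Matrix.transpose_sub,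
      Matrix.transpose_mul, Matrix.transpose_mul, Matrix.transpose_transpose, hRt, hPKt]
  have hT2 : (R * (K - Ks))ᵀ = Kᵀ * R - Ksᵀ * R := by
    rw [Matrix.transpose_mul, Matrix.transpose_sub, hRt, Matrix.sub_mul]
  rw [hT1, hT2, htr, hM]
  simp only [Matrix.transpose_sub, Matrix.mul_sub, Matrix.sub_mul, Matrix.mul_add,
    Matrix.add_mul, Matrix.mul_neg, Matrix.neg_mul, trace_sub, trace_add, trace_neg,
    Matrix.mul_assoc]
  have hb1 : (Kᵀ * (R * (K * Ys))).trace = (K * (Ys * (Kᵀ * R))).trace := by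
    rw [rot4 Kᵀ R K Ys, rot4 R K Ys Kᵀ]
  have hb2 : (Ksᵀ * (R * (Ks * Ys))).trace = (Ks * (Ys * (Ksᵀ * R))).trace := by
    rw [rot4 Ksᵀ R Ks Ys, rot4 R Ks Ys Ksᵀ]
  have hb5 : (PK * (B * (K * Ys))).trace = (K * (Ys * (PK * B))).trace := by
    rw [rot4 PK B K Ys, rot4 B K Ys PK]
  have hb6 : (PK * (B * (Ks * Ys))).trace = (Ks * (Ys * (PK * B))).trace := by
    rw [rot4 PK B Ks Ys, rot4 B Ks Ys PK]
  have hb3 : (Kᵀ * (Bᵀ * (PK * Ys))).trace = (K * (Ys * (PK * B))).trace := by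
    rw [trans4 Kᵀ Bᵀ PK Ys, Matrix.transpose_transpose, Matrix.transpose_transpose,
      hYst, hPKt, rot4 Ys PK B K, rot4 PK B K Ys, rot4 B K Ys PK]
  have hb4 : (Ksᵀ * (Bᵀ * (PK * Ys))).trace = (Ks * (Ys * (PK * B))).trace := by
    rw [trans4 Ksᵀ Bᵀ PK Ys, Matrix.transpose_transpose, Matrix.transpose_transpose,
      hYst, hPKt, rot4 Ys PK B Ks, rot4 PK B Ks Ys, rot4 B Ks Ys PK]
  have ha2 : (Ks * (Ys * (Kᵀ * R))).trace = (K * (Ys * (Ksᵀ * R))).trace := by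
    rw [trans4 Ks Ys Kᵀ R, Matrix.transpose_transpose, hYst, hRt, rot4 R K Ys Ksᵀ]
  linarith [hb1, hb2, hb3, hb4, hb5, hb6, ha2]
end

section
/- For any stabilizing gain K ∈ 𝒢, with K₊ = R⁻¹BᵀP_K, the bound ⟨K−K₊, R(K−K₊)⟩_{Y*} ≤ (1 + ‖Y*‖·‖BR⁻¹Bᵀ‖·Tr(P_K))·Tr(P_K − P*) holds. -/
open Matrix Filter Topology
open scoped Matrix.Norms.L2Operator ENNReal NNReal

open scoped MatrixOrder in
lemma psd_eq_ct_mul_self {n : ℕ} {X : Matrix (Fin n) (Fin n) ℝ} (hX : X.PosSemidef) :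
    ∃ B : Matrix (Fin n) (Fin n) ℝ, X = Bᴴ * B := by
  classical
  obtain ⟨Y, hY, -, hYY⟩ :=
    CFC.exists_sqrt_of_isSelfAdjoint_of_quasispectrumRestricts hX.isHermitian
      (QuasispectrumRestricts.nnreal_of_nonneg hX.nonneg)
  have hYY' : Y * Y = X := by simpa using hYY
  refine ⟨Y, ?_⟩
  rw [← hYY']
  congr 1
  exact hY.star_eq.symm

lemma trace_form_le {n : ℕ} {X Y : Matrix (Fin n) (Fin n) ℝ} (hX : X.PosSemidef) {c : ℝ}
    (hY : ∀ v : Fin n → ℝ, v ⬝ᵥ Y *ᵥ v ≤ c * (v ⬝ᵥ v)) : (Y * X).trace ≤ c * X.trace := by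
  obtain ⟨B, rfl⟩ := psd_eq_ct_mul_self hX
  have h1 : (Y * (Bᴴ * B)).trace = ∑ i, (B i) ⬝ᵥ Y *ᵥ (B i) := by
    rw [← Matrix.mul_assoc, Matrix.trace_mul_comm]
    simp only [Matrix.trace, Matrix.diag, Matrix.mul_apply, dotProduct, Matrix.mulVec,
      Matrix.conjTranspose_apply, star_trivial, Finset.mul_sum, Finset.sum_mul]
  have h2 : (Bᴴ * B).trace = ∑ i, (B i) ⬝ᵥ (B i) := by
    simp only [Matrix.trace, Matrix.diag, Matrix.mul_apply, Matrix.conjTranspose_apply,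
      star_trivial, dotProduct]
    rw [Finset.sum_comm]
  rw [h1, h2, Finset.mul_sum]
  exact Finset.sum_le_sum fun i _ => hY (B i)

lemma quad_le_norm {n : ℕ} (Y : Matrix (Fin n) (Fin n) ℝ) (v : Fin n → ℝ) :
    v ⬝ᵥ Y *ᵥ v ≤ ‖Y‖ * (v ⬝ᵥ v) := by
  set x : EuclideanSpace ℝ (Fin n) := (WithLp.equiv 2 _).symm v with hx
  have hdot : ∀ w : Fin n → ℝ, v ⬝ᵥ w = @inner ℝ _ _ x ((WithLp.equiv 2 (Fin n → ℝ)).symm w) := by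
    intro w
    simp [PiLp.inner_apply, dotProduct, hx, mul_comm]
  have h1 : v ⬝ᵥ Y *ᵥ v = @inner ℝ _ _ x ((WithLp.equiv 2 (Fin n → ℝ)).symm (Y *ᵥ v)) := hdot _
  have h2 : v ⬝ᵥ v = ‖x‖ ^ 2 := by rw [hdot v, real_inner_self_eq_norm_sq]
  rw [h1, h2]
  calc @inner ℝ _ _ x ((WithLp.equiv 2 (Fin n → ℝ)).symm (Y *ᵥ v))
      ≤ ‖x‖ * ‖(WithLp.equiv 2 (Fin n → ℝ)).symm (Y *ᵥ v)‖ := real_inner_le_norm _ _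
    _ ≤ ‖x‖ * (‖Y‖ * ‖x‖) := by
        refine mul_le_mul_of_nonneg_left ?_ (norm_nonneg _)
        exact Y.l2_opNorm_mulVec x
    _ = ‖Y‖ * ‖x‖ ^ 2 := by ring

lemma dot_conjmul {n m : ℕ} (B : Matrix (Fin m) (Fin n) ℝ) (v : Fin n → ℝ) :
    v ⬝ᵥ (Bᴴ * B) *ᵥ v = (B *ᵥ v) ⬝ᵥ (B *ᵥ v) := by
  rw [← Matrix.mulVec_mulVec, Matrix.dotProduct_mulVec,
    Matrix.conjTranspose_eq_transpose_of_trivial, Matrix.vecMul_transpose]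

lemma quad_le_trace {n : ℕ} {P : Matrix (Fin n) (Fin n) ℝ} (hP : P.PosSemidef) (v : Fin n → ℝ) :
    v ⬝ᵥ P *ᵥ v ≤ P.trace * (v ⬝ᵥ v) := by
  obtain ⟨B, rfl⟩ := psd_eq_ct_mul_self hP
  rw [dot_conjmul]
  have h2 : (Bᴴ * B).trace = ∑ i, (B i ⬝ᵥ B i) := by
    simp only [Matrix.trace, Matrix.diag, Matrix.mul_apply, Matrix.conjTranspose_apply,
      star_trivial, dotProduct]
    rw [Finset.sum_comm]
  have h3 : (B *ᵥ v) ⬝ᵥ (B *ᵥ v) = ∑ i, (B i ⬝ᵥ v) ^ 2 := by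
    simp [dotProduct, Matrix.mulVec, sq]
  rw [h2, h3, Finset.sum_mul]
  refine Finset.sum_le_sum fun i _ => ?_
  calc (B i ⬝ᵥ v) ^ 2 ≤ (∑ j, B i j ^ 2) * ∑ j, v j ^ 2 :=
      Finset.sum_mul_sq_le_sq_mul_sq Finset.univ (B i) v
    _ = (B i ⬝ᵥ B i) * (v ⬝ᵥ v) := by simp [dotProduct, sq]

lemma psd_trace_nonneg {n : ℕ} {P : Matrix (Fin n) (Fin n) ℝ} (hP : P.PosSemidef) :
    0 ≤ P.trace := by
  obtain ⟨B, rfl⟩ := psd_eq_ct_mul_self hP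
  simp only [Matrix.trace, Matrix.diag, Matrix.mul_apply, Matrix.conjTranspose_apply,
    star_trivial]
  exact Finset.sum_nonneg fun i _ => Finset.sum_nonneg fun j _ => mul_self_nonneg _

lemma hurwitz_shift_unit {n : ℕ} {A : Matrix (Fin n) (Fin n) ℝ} (hA : Hurwitz A)
    {lam : ℂ} (hre : 0 ≤ lam.re) :
    IsUnit (algebraMap ℂ (Matrix (Fin n) (Fin n) ℂ) lam - A.map Complex.ofReal) := by
  by_contra h
  exact absurd (hA lam (spectrum.mem_iff.mpr h)) (not_lt.mpr hre)

lemma isUnit_det_of_complex {n : ℕ} (M : Matrix (Fin n) (Fin n) ℝ)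
    (h : IsUnit (M.map Complex.ofReal)) : IsUnit M.det := by
  have hd : (M.map Complex.ofReal).det = Complex.ofReal M.det := by
    have h3 := RingHom.map_det Complex.ofRealHom M
    have h4 : M.map Complex.ofReal = Complex.ofRealHom.mapMatrix M := rfl
    rw [h4, ← h3]; rfl
  have h2 := (Matrix.isUnit_iff_isUnit_det _).mp h
  rw [hd, isUnit_iff_ne_zero] at h2
  rw [isUnit_iff_ne_zero]
  exact fun h0 => h2 (by rw [h0, Complex.ofReal_zero])

lemma entry_abs_le_l2norm {n : ℕ} (M : Matrix (Fin n) (Fin n) ℂ) (i j : Fin n) :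
    ‖M i j‖ ≤ ‖M‖ := by
  have h2 := M.l2_opNorm_mulVec (EuclideanSpace.single j (1:ℂ))
  rw [EuclideanSpace.norm_single, norm_one, mul_one] at h2
  set y : EuclideanSpace ℂ (Fin n) :=
    (EuclideanSpace.equiv (Fin n) ℂ).symm (M *ᵥ EuclideanSpace.single j (1:ℂ)) with hy
  have h4 : ‖y i‖ ≤ ‖y‖ := by
    have h := norm_inner_le_norm (𝕜 := ℂ) (EuclideanSpace.single i (1:ℂ)) y
    rw [EuclideanSpace.inner_single_left, EuclideanSpace.norm_single,
      norm_one, one_mul] at h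
    simpa using h
  have h5 : y i = M i j := by
    show (M *ᵥ (EuclideanSpace.single j (1:ℂ) : EuclideanSpace ℂ (Fin n))) i = M i j
    simp [Matrix.mulVec, dotProduct, EuclideanSpace.single_apply]
  rw [← h5]
  exact h4.trans h2
lemma hurwitz_cayley {n : ℕ} (hn : 0 < n) {Acl : Matrix (Fin n) (Fin n) ℝ} (hA : Hurwitz Acl) :
    IsUnit (Acl - 1).det ∧
    Tendsto (fun k : ℕ => ‖(((Acl + 1) * (Acl - 1)⁻¹).map Complex.ofReal) ^ k‖) atTop (𝓝 0) := by
  haveI : Nonempty (Fin n) := ⟨⟨0, hn⟩⟩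
  set φ : Matrix (Fin n) (Fin n) ℝ →+* Matrix (Fin n) (Fin n) ℂ := Complex.ofRealHom.mapMatrix with hφ
  have hφdef : ∀ M : Matrix (Fin n) (Fin n) ℝ, M.map Complex.ofReal = φ M := fun _ => rfl
  set Ac : Matrix (Fin n) (Fin n) ℂ := Acl.map Complex.ofReal with hAc
  -- E := Acl - 1 is invertible
  have h1unit : IsUnit ((1 : Matrix (Fin n) (Fin n) ℂ) - Ac) := by
    have := hurwitz_shift_unit hA (lam := 1) (by norm_num)
    rwa [_root_.map_one] at this
  have hEcunit : IsUnit (Ac - 1) := by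
    have := h1unit.neg
    rwa [neg_sub] at this
  have hEmap : (Acl - 1).map Complex.ofReal = Ac - 1 := by
    rw [hφdef, _root_.map_sub, _root_.map_one, hAc, hφdef]
  have hEdet : IsUnit (Acl - 1).det := isUnit_det_of_complex _ (by rw [hEmap]; exact hEcunit)
  refine ⟨hEdet, ?_⟩
  have hEcdet : IsUnit (Ac - 1).det := (Matrix.isUnit_iff_isUnit_det _).mp hEcunit
  have hEE : (Ac - 1) * (Ac - 1)⁻¹ = 1 := Matrix.mul_nonsing_inv _ hEcdet
  have hEE' : (Ac - 1)⁻¹ * (Ac - 1) = 1 := Matrix.nonsing_inv_mul _ hEcdet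
  have hmapinv : φ ((Acl - 1)⁻¹) = (Ac - 1)⁻¹ := by
    symm
    apply Matrix.inv_eq_right_inv
    have : (Acl - 1) * (Acl - 1)⁻¹ = 1 := Matrix.mul_nonsing_inv _ hEdet
    calc (Ac - 1) * φ ((Acl - 1)⁻¹) = φ (Acl - 1) * φ ((Acl - 1)⁻¹) := by
          rw [← hEmap, hφdef]
      _ = φ ((Acl - 1) * (Acl - 1)⁻¹) := (_root_.map_mul φ _ _).symm
      _ = 1 := by rw [this, _root_.map_one]
  set Cc : Matrix (Fin n) (Fin n) ℂ := ((Acl + 1) * (Acl - 1)⁻¹).map Complex.ofReal with hCc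
  have hCceq : Cc = (Ac + 1) * (Ac - 1)⁻¹ := by
    rw [hCc, hφdef, _root_.map_mul, hmapinv, _root_.map_add, _root_.map_one, hAc, hφdef]
  -- spectrum of Cc is inside the open unit disc
  have hr : ∀ z ∈ spectrum ℂ Cc, ‖z‖₊ < 1 := by
    intro z hz
    by_contra hge
    push_neg at hge
    have hz1 : (1:ℝ) ≤ ‖z‖ := by exact_mod_cast hge
    rw [spectrum.mem_iff] at hz
    apply hz
    have key : algebraMap ℂ (Matrix (Fin n) (Fin n) ℂ) z - Cc
        = (z • (Ac - 1) - (Ac + 1)) * (Ac - 1)⁻¹ := by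
      rw [sub_mul, smul_mul_assoc, hEE, hCceq, Algebra.algebraMap_eq_smul_one]
    rw [key]
    have hEinvunit : IsUnit (Ac - 1)⁻¹ := (Matrix.isUnit_iff_isUnit_det _).mpr (Matrix.isUnit_nonsing_inv_det _ hEcdet)
    rcases eq_or_ne z 1 with hz1' | hz1'
    · have h2' : z • (Ac - 1) - (Ac + 1) = algebraMap ℂ (Matrix (Fin n) (Fin n) ℂ) (-2) := by
        rw [hz1', one_smul, _root_.map_neg, map_ofNat]
        have : (Ac - 1) - (Ac + 1) = -(1 + 1) := by abel
        rw [this]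
        norm_num
      rw [h2']
      exact (((isUnit_iff_ne_zero).mpr (by norm_num : (-2:ℂ) ≠ 0)).map
        (algebraMap ℂ (Matrix (Fin n) (Fin n) ℂ))).mul hEinvunit
    · set w : ℂ := (z + 1) / (z - 1) with hw
      have hzne : z - 1 ≠ 0 := sub_ne_zero.mpr hz1'
      have hwre : 0 ≤ w.re := by
        rw [hw, Complex.div_re]
        have h1 : 1 ≤ Complex.normSq z := by
          have hsq := Complex.sq_norm z
          have habs : (1:ℝ) ≤ ‖z‖ := hz1
          nlinarith
        have h2 : 0 < Complex.normSq (z - 1) := Complex.normSq_pos.mpr hzne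
        rw [← add_div]
        apply div_nonneg _ h2.le
        simp only [Complex.add_re, Complex.sub_re, Complex.one_re, Complex.add_im,
          Complex.sub_im, Complex.one_im]
        have := Complex.normSq_apply z
        nlinarith [h1, Complex.normSq_apply z]
      have hwmul : (z - 1) * w = z + 1 := by
        rw [hw]; field_simp
      have key2 : z • (Ac - 1) - (Ac + 1) = (z - 1) • (Ac - w • 1) := by
        have e1 : (z - 1) • (Ac - w • (1 : Matrix (Fin n) (Fin n) ℂ))
            = (z - 1) • Ac - ((z - 1) * w) • (1 : Matrix (Fin n) (Fin n) ℂ) := by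
          rw [smul_sub, smul_smul]
        rw [e1, hwmul]
        module
      rw [key2]
      have hunit2 : IsUnit (Ac - w • 1) := by
        have := (hurwitz_shift_unit hA hwre).neg
        rw [neg_sub, Algebra.algebraMap_eq_smul_one] at this
        exact this
      rw [Algebra.smul_def]
      exact ((((isUnit_iff_ne_zero).mpr hzne).map (algebraMap ℂ (Matrix (Fin n) (Fin n) ℂ))).mul hunit2).mul hEinvunit
  have hρ : spectralRadius ℂ Cc < 1 := by
    have := spectrum.spectralRadius_lt_of_forall_lt (a := Cc) (r := 1) hr
    simpa using this
  have hg := spectrum.pow_nnnorm_pow_one_div_tendsto_nhds_spectralRadius Cc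
  obtain ⟨t, ht1, ht2⟩ := exists_between hρ
  have htne : t ≠ ⊤ := ht2.ne_top
  have hev := hg.eventually_lt_const ht1
  have hev2 : ∀ᶠ k : ℕ in atTop, ‖Cc ^ k‖ ≤ t.toReal ^ k := by
    filter_upwards [hev, eventually_ge_atTop 1] with k hk hk1
    have hk0 : (k:ℝ) ≠ 0 := Nat.cast_ne_zero.mpr (by omega)
    have h3 : ((‖Cc ^ k‖₊ : ℝ≥0∞) ^ (1/(k:ℝ))) ^ (k:ℝ) ≤ t ^ (k:ℝ) :=
      ENNReal.rpow_le_rpow hk.le (by positivity)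
    rw [← ENNReal.rpow_mul, one_div, inv_mul_cancel₀ hk0, ENNReal.rpow_one] at h3
    have h4 : (‖Cc ^ k‖₊ : ℝ≥0∞).toReal ≤ (t ^ (k:ℝ)).toReal :=
      ENNReal.toReal_mono (ENNReal.rpow_ne_top_of_nonneg (by positivity) htne) h3
    rw [ENNReal.coe_toReal, coe_nnnorm] at h4
    calc ‖Cc ^ k‖ ≤ (t ^ (k:ℝ)).toReal := h4
      _ = t.toReal ^ (k:ℝ) := by rw [← ENNReal.toReal_rpow]
      _ = t.toReal ^ k := by rw [Real.rpow_natCast]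
  have ht1' : t.toReal < 1 := by
    have := (ENNReal.toReal_lt_toReal htne (by norm_num : (1:ℝ≥0∞) ≠ ⊤)).mpr ht2
    simpa using this
  have hpow : Tendsto (fun k : ℕ => t.toReal ^ k) atTop (𝓝 0) :=
    tendsto_pow_atTop_nhds_zero_of_lt_one ENNReal.toReal_nonneg ht1'
  exact squeeze_zero' (Eventually.of_forall fun k => norm_nonneg _) hev2 hpow
lemma lyap_posSemidef {n : ℕ} {Acl X S : Matrix (Fin n) (Fin n) ℝ}
    (hA : Hurwitz Acl) (hX : X.IsHermitian) (hS : S.PosSemidef)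
    (heq : Aclᵀ * X + X * Acl + S = 0) : X.PosSemidef := by
  rcases Nat.eq_zero_or_pos n with hn | hn
  · subst hn
    exact Matrix.PosSemidef.of_dotProduct_mulVec_nonneg hX fun x => by simp [dotProduct]
  obtain ⟨hEdet, htend⟩ := hurwitz_cayley hn hA
  set E : Matrix (Fin n) (Fin n) ℝ := Acl - 1 with hE
  set C : Matrix (Fin n) (Fin n) ℝ := (Acl + 1) * E⁻¹ with hC
  have hEE : E * E⁻¹ = 1 := Matrix.mul_nonsing_inv _ hEdet
  have hAX : Aclᵀ * X + X * Acl = -S := eq_neg_of_add_eq_zero_left heq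
  set S₂ : Matrix (Fin n) (Fin n) ℝ := (E⁻¹)ᵀ * (S + S) * E⁻¹ with hS₂
  have hS2 : S₂.PosSemidef := by
    have h := (hS.add hS).conjTranspose_mul_mul_same (E⁻¹)
    rwa [Matrix.conjTranspose_eq_transpose_of_trivial] at h
  -- key identity
  have hbracket : Eᵀ * X * E = (Acl + 1)ᵀ * X * (Acl + 1) + (S + S) := by
    have h1 : Eᵀ = Aclᵀ - 1 := by rw [hE, Matrix.transpose_sub, Matrix.transpose_one]
    have h2 : (Acl + 1)ᵀ = Aclᵀ + 1 := by rw [Matrix.transpose_add, Matrix.transpose_one]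
    rw [h1, h2, hE]
    have expand : (Aclᵀ - 1) * X * (Acl - 1) - (Aclᵀ + 1) * X * (Acl + 1)
        = -((Aclᵀ * X + X * Acl) + (Aclᵀ * X + X * Acl)) := by noncomm_ring
    rw [hAX] at expand
    have : -(-S + -S) = S + S := by abel
    rw [this] at expand
    linear_combination (norm := noncomm_ring) expand
  have key : X = Cᵀ * X * C + S₂ := by
    have hX0 : X = (E⁻¹)ᵀ * (Eᵀ * X * E) * E⁻¹ := by
      have h3 : (E⁻¹)ᵀ * Eᵀ = 1 := by rw [← Matrix.transpose_mul, hEE, Matrix.transpose_one]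
      calc X = 1 * X * 1 := by rw [Matrix.one_mul, Matrix.mul_one]
        _ = ((E⁻¹)ᵀ * Eᵀ) * X * (E * E⁻¹) := by rw [h3, hEE]
        _ = (E⁻¹)ᵀ * (Eᵀ * X * E) * E⁻¹ := by noncomm_ring
    have hCt : Cᵀ * X * C = (E⁻¹)ᵀ * ((Acl + 1)ᵀ * X * (Acl + 1)) * E⁻¹ := by
      rw [hC, Matrix.transpose_mul]
      noncomm_ring
    calc X = (E⁻¹)ᵀ * (Eᵀ * X * E) * E⁻¹ := hX0
      _ = (E⁻¹)ᵀ * ((Acl + 1)ᵀ * X * (Acl + 1) + (S + S)) * E⁻¹ := by rw [hbracket]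
      _ = (E⁻¹)ᵀ * ((Acl + 1)ᵀ * X * (Acl + 1)) * E⁻¹ + (E⁻¹)ᵀ * (S + S) * E⁻¹ := by
          noncomm_ring
      _ = Cᵀ * X * C + S₂ := by rw [hCt, hS₂]
  -- single step quadratic form inequality
  have hdotC : ∀ (M : Matrix (Fin n) (Fin n) ℝ) (v w : Fin n → ℝ),
      v ⬝ᵥ (Cᵀ * M) *ᵥ w = (C *ᵥ v) ⬝ᵥ M *ᵥ w := by
    intro M v w
    rw [← Matrix.mulVec_mulVec, Matrix.dotProduct_mulVec v Cᵀ, Matrix.vecMul_transpose]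
  clear_value S₂ C E
  have step : ∀ v : Fin n → ℝ, (C *ᵥ v) ⬝ᵥ X *ᵥ (C *ᵥ v) ≤ v ⬝ᵥ X *ᵥ v := by
    intro v
    have h4 : v ⬝ᵥ X *ᵥ v = (C *ᵥ v) ⬝ᵥ X *ᵥ (C *ᵥ v) + v ⬝ᵥ S₂ *ᵥ v := by
      conv_lhs => rw [key]
      rw [Matrix.add_mulVec, dotProduct_add, Matrix.mul_assoc, hdotC (X * C) v v,
        ← Matrix.mulVec_mulVec]
    have h5 : 0 ≤ v ⬝ᵥ S₂ *ᵥ v := by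
      have := hS2.dotProduct_mulVec_nonneg v
      rwa [star_trivial] at this
    linarith [h4, h5]
  have iter : ∀ (k : ℕ) (v : Fin n → ℝ),
      ((C ^ k) *ᵥ v) ⬝ᵥ X *ᵥ ((C ^ k) *ᵥ v) ≤ v ⬝ᵥ X *ᵥ v := by
    intro k
    induction k with
    | zero => intro v; simp [pow_zero, Matrix.one_mulVec]
    | succ k ih =>
      intro v
      rw [pow_succ, ← Matrix.mulVec_mulVec]
      exact (ih (C *ᵥ v)).trans (step v)
  -- entries of C^k tend to zero
  have hmap : ∀ k : ℕ, (C.map Complex.ofReal) ^ k = (C ^ k).map Complex.ofReal := by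
    intro k
    exact (map_pow (Complex.ofRealHom.mapMatrix) C k).symm
  have hent : ∀ i j, Tendsto (fun k => (C ^ k) i j) atTop (𝓝 0) := by
    intro i j
    apply squeeze_zero_norm _ htend
    intro k
    have h6 := entry_abs_le_l2norm ((C.map Complex.ofReal) ^ k) i j
    have h7 : ((C.map Complex.ofReal) ^ k) i j = Complex.ofReal ((C ^ k) i j) := by
      rw [hmap k]; rfl
    rw [h7, Complex.norm_real] at h6
    exact h6
  refine Matrix.PosSemidef.of_dotProduct_mulVec_nonneg hX fun v => ?_
  rw [star_trivial]
  have hw : ∀ i, Tendsto (fun k => ((C ^ k) *ᵥ v) i) atTop (𝓝 0) := by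
    intro i
    have : (fun k => ((C ^ k) *ᵥ v) i) = fun k => ∑ j, (C ^ k) i j * v j := by
      funext k; rfl
    rw [this]
    have h8 : Tendsto (fun k => ∑ j, (C ^ k) i j * v j) atTop (𝓝 (∑ j : Fin n, 0 * v j)) :=
      tendsto_finset_sum _ fun j _ => (hent i j).mul_const (v j)
    simpa using h8
  have hquad : Tendsto (fun k => ((C ^ k) *ᵥ v) ⬝ᵥ X *ᵥ ((C ^ k) *ᵥ v)) atTop (𝓝 0) := by
    have : ∀ k, ((C ^ k) *ᵥ v) ⬝ᵥ X *ᵥ ((C ^ k) *ᵥ v)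
        = ∑ i, ((C ^ k) *ᵥ v) i * (∑ j, X i j * ((C ^ k) *ᵥ v) j) := by
      intro k; rfl
    simp only [this]
    have h9 : Tendsto (fun k => ∑ i, ((C ^ k) *ᵥ v) i * (∑ j, X i j * ((C ^ k) *ᵥ v) j))
        atTop (𝓝 (∑ i : Fin n, 0 * (∑ j : Fin n, X i j * 0))) := by
      apply tendsto_finset_sum
      intro i _
      exact (hw i).mul (tendsto_finset_sum _ fun j _ => ((hw j).const_mul (X i j)))
    simpa using h9
  exact le_of_tendsto' hquad (fun k => iter k v)

/-- For any stabilizing gain `K`, with `K₊ = R⁻¹BᵀP_K`, the bound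
`⟨K−K₊, R(K−K₊)⟩_{Y*} ≤ (1 + ‖Y*‖·‖BR⁻¹Bᵀ‖·Tr(P_K))·Tr(P_K − P*)` holds,
where `⟨M,N⟩_{Y*} = Tr(M Y* Nᵀ)` and `‖·‖` is the spectral norm. -/
theorem gauss_newton_trace_bound {n m : ℕ}
    (A : Matrix (Fin n) (Fin n) ℝ) (B : Matrix (Fin n) (Fin m) ℝ)
    (Q : Matrix (Fin n) (Fin n) ℝ) (R : Matrix (Fin m) (Fin m) ℝ)
    (hQ : Q.PosDef) (hR : R.PosDef)
    (Ps : Matrix (Fin n) (Fin n) ℝ) (hPs : Ps.PosDef)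
    (hARE : Aᵀ * Ps + Ps * A + Q - Ps * B * R⁻¹ * Bᵀ * Ps = 0)
    (Ks : Matrix (Fin m) (Fin n) ℝ) (hKs : Ks = R⁻¹ * Bᵀ * Ps)
    (hKsHur : Hurwitz (A - B * Ks))
    (Ys : Matrix (Fin n) (Fin n) ℝ) (hYs : Ys.PosDef)
    (hYseq : (A - B * Ks) * Ys + Ys * (A - B * Ks)ᵀ + 1 = 0)
    (K : Matrix (Fin m) (Fin n) ℝ) (hK : Hurwitz (A - B * K))
    (PK : Matrix (Fin n) (Fin n) ℝ) (hPK : PK.PosDef)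
    (hPKeq : (A - B * K)ᵀ * PK + PK * (A - B * K) + Q + Kᵀ * R * K = 0) :
    ((K - R⁻¹ * Bᵀ * PK) * Ys * (R * (K - R⁻¹ * Bᵀ * PK))ᵀ).trace ≤
      (1 + ‖Ys‖ * ‖B * R⁻¹ * Bᵀ‖ * PK.trace) * (PK - Ps).trace := by
  -- symmetry facts
  have hRt : Rᵀ = R := by
    rw [← Matrix.conjTranspose_eq_transpose_of_trivial]; exact hR.1
  have hPKt : PKᵀ = PK := by
    rw [← Matrix.conjTranspose_eq_transpose_of_trivial]; exact hPK.1
  have hPst : Psᵀ = Ps := by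
    rw [← Matrix.conjTranspose_eq_transpose_of_trivial]; exact hPs.1
  have hRdet : IsUnit R.det := hR.det_pos.ne'.isUnit
  have hRRinv : R * R⁻¹ = 1 := Matrix.mul_nonsing_inv _ hRdet
  have hRinvR : R⁻¹ * R = 1 := Matrix.nonsing_inv_mul _ hRdet
  have hRit : (R⁻¹)ᵀ = R⁻¹ := by rw [Matrix.transpose_nonsing_inv, hRt]
  have hBtPs : Bᵀ * Ps = R * Ks := by
    rw [hKs, ← Matrix.mul_assoc, ← Matrix.mul_assoc, hRRinv, Matrix.one_mul]
  have hPsB : Ps * B = Ksᵀ * R := by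
    have h := congrArg Matrix.transpose hBtPs
    rw [Matrix.transpose_mul, Matrix.transpose_mul, Matrix.transpose_transpose, hPst, hRt] at h
    exact h
  -- rewrite rules (oriented to eliminate `Bᵀ * Ps`, `Ps * B`, `R * R⁻¹`, `R⁻¹ * R`)
  have r1 : ∀ (k : ℕ) (Y : Matrix (Fin n) (Fin k) ℝ), Bᵀ * (Ps * Y) = R * (Ks * Y) := by
    intro k Y; rw [← Matrix.mul_assoc, hBtPs, Matrix.mul_assoc]
  have r2 : ∀ (k : ℕ) (Y : Matrix (Fin m) (Fin k) ℝ), Ps * (B * Y) = Ksᵀ * (R * Y) := by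
    intro k Y; rw [← Matrix.mul_assoc, hPsB, Matrix.mul_assoc]
  have r3 : ∀ (k : ℕ) (Y : Matrix (Fin m) (Fin k) ℝ), R * (R⁻¹ * Y) = Y := by
    intro k Y; rw [← Matrix.mul_assoc, hRRinv, Matrix.one_mul]
  have r4 : ∀ (k : ℕ) (Y : Matrix (Fin m) (Fin k) ℝ), R⁻¹ * (R * Y) = Y := by
    intro k Y; rw [← Matrix.mul_assoc, hRinvR, Matrix.one_mul]
  have h1 := hPKeq
  have h2 := hARE
  simp only [Matrix.transpose_sub, Matrix.transpose_mul, Matrix.transpose_transpose,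
    Matrix.sub_mul, Matrix.mul_sub, Matrix.add_mul, Matrix.mul_add, Matrix.mul_assoc,
    hPKt, hPst, hRt, hRit, r1, r2, r3, r4, hBtPs, hPsB] at h1 h2
  -- the closed-loop Lyapunov equation for PK - Ps
  have heq1 : (A - B * K)ᵀ * (PK - Ps) + (PK - Ps) * (A - B * K)
      + (K - Ks)ᵀ * R * (K - Ks) = 0 := by
    simp only [Matrix.transpose_sub, Matrix.transpose_mul, Matrix.transpose_transpose,
      Matrix.sub_mul, Matrix.mul_sub, Matrix.add_mul, Matrix.mul_add, Matrix.mul_assoc,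
      hPKt, hPst, hRt, hRit, r1, r2, r3, r4, hBtPs, hPsB]
    linear_combination (norm := noncomm_ring) h1 - h2
  have hSpsd : ((K - Ks)ᵀ * R * (K - Ks)).PosSemidef := by
    have h := hR.posSemidef.conjTranspose_mul_mul_same (K - Ks)
    rwa [Matrix.conjTranspose_eq_transpose_of_trivial] at h
  have hΔ : (PK - Ps).PosSemidef := lyap_posSemidef hK (hPK.1.sub hPs.1) hSpsd heq1
  -- key algebraic identity
  have hF : (K - R⁻¹ * Bᵀ * PK)ᵀ * R * (K - R⁻¹ * Bᵀ * PK)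
      = (PK - Ps) * (B * R⁻¹ * Bᵀ) * (PK - Ps)
        - ((A - B * Ks)ᵀ * (PK - Ps) + (PK - Ps) * (A - B * Ks)) := by
    simp only [Matrix.transpose_sub, Matrix.transpose_mul, Matrix.transpose_transpose,
      Matrix.sub_mul, Matrix.mul_sub, Matrix.add_mul, Matrix.mul_add, Matrix.mul_assoc,
      hPKt, hPst, hRt, hRit, r1, r2, r3, r4, hBtPs, hPsB]
    linear_combination (norm := noncomm_ring) h1 - h2
  -- rewrite the left-hand side trace
  have hLHS : ((K - R⁻¹ * Bᵀ * PK) * Ys * (R * (K - R⁻¹ * Bᵀ * PK))ᵀ).trace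
      = (((K - R⁻¹ * Bᵀ * PK)ᵀ * R * (K - R⁻¹ * Bᵀ * PK)) * Ys).trace := by
    have h9 : (R * (K - R⁻¹ * Bᵀ * PK))ᵀ = (K - R⁻¹ * Bᵀ * PK)ᵀ * R := by
      rw [Matrix.transpose_mul, hRt]
    rw [h9, Matrix.trace_mul_comm]
    congr 1
    exact (Matrix.mul_assoc _ _ _).symm
  rw [hLHS, hF, Matrix.sub_mul, Matrix.add_mul, Matrix.trace_sub, Matrix.trace_add]
  -- the cross terms give the trace of PK - Ps
  have hAs : (A - B * Ks) * Ys + Ys * (A - B * Ks)ᵀ = -1 := eq_neg_of_add_eq_zero_left hYseq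
  have htr2 : ((A - B * Ks)ᵀ * (PK - Ps) * Ys).trace
      + ((PK - Ps) * (A - B * Ks) * Ys).trace = -(PK - Ps).trace := by
    have e1 : ((A - B * Ks)ᵀ * (PK - Ps) * Ys).trace
        = ((PK - Ps) * (Ys * (A - B * Ks)ᵀ)).trace := by
      rw [Matrix.trace_mul_cycle, Matrix.trace_mul_cycle, Matrix.mul_assoc]
    have e2 : ((PK - Ps) * (A - B * Ks) * Ys).trace
        = ((PK - Ps) * ((A - B * Ks) * Ys)).trace := by
      rw [Matrix.mul_assoc]
    rw [e1, e2, ← Matrix.trace_add, ← Matrix.mul_add,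
      add_comm (Ys * (A - B * Ks)ᵀ) ((A - B * Ks) * Ys), hAs, mul_neg, mul_one,
      Matrix.trace_neg]
  -- positivity facts
  have hMM : (B * R⁻¹ * Bᵀ).PosSemidef := by
    have h := (hR.inv.posSemidef).mul_mul_conjTranspose_same B
    rwa [Matrix.conjTranspose_eq_transpose_of_trivial] at h
  have hΔherm : (PK - Ps)ᴴ = PK - Ps := (hPK.1.sub hPs.1).eq
  have hDMD : ((PK - Ps) * (B * R⁻¹ * Bᵀ) * (PK - Ps)).PosSemidef := by
    have h := hMM.mul_mul_conjTranspose_same (PK - Ps)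
    rwa [hΔherm] at h
  have hΔΔ : ((PK - Ps) * (PK - Ps)).PosSemidef := by
    have h := Matrix.posSemidef_conjTranspose_mul_self (PK - Ps)
    rwa [hΔherm] at h
  -- chain of trace bounds
  have t1 : ((PK - Ps) * (B * R⁻¹ * Bᵀ) * (PK - Ps) * Ys).trace
      ≤ ‖Ys‖ * ((PK - Ps) * (B * R⁻¹ * Bᵀ) * (PK - Ps)).trace := by
    rw [Matrix.trace_mul_comm]
    exact trace_form_le hDMD (quad_le_norm Ys)
  have t2 : ((PK - Ps) * (B * R⁻¹ * Bᵀ) * (PK - Ps)).trace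
      ≤ ‖B * R⁻¹ * Bᵀ‖ * ((PK - Ps) * (PK - Ps)).trace := by
    have e3 : ((PK - Ps) * (B * R⁻¹ * Bᵀ) * (PK - Ps)).trace
        = ((B * R⁻¹ * Bᵀ) * ((PK - Ps) * (PK - Ps))).trace := by
      rw [Matrix.trace_mul_cycle, Matrix.trace_mul_comm]
    rw [e3]
    exact trace_form_le hΔΔ (quad_le_norm _)
  have t3 : ((PK - Ps) * (PK - Ps)).trace ≤ PK.trace * (PK - Ps).trace := by
    refine trace_form_le hΔ ?_
    intro v
    have hq1 := quad_le_trace hPK.posSemidef v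
    have hq2 := hPs.posSemidef.dotProduct_mulVec_nonneg v
    rw [star_trivial] at hq2
    have hsub : v ⬝ᵥ (PK - Ps) *ᵥ v = v ⬝ᵥ PK *ᵥ v - v ⬝ᵥ Ps *ᵥ v := by
      rw [Matrix.sub_mulVec, dotProduct_sub]
    linarith
  have hYsn : (0:ℝ) ≤ ‖Ys‖ := norm_nonneg _
  have hMMn : (0:ℝ) ≤ ‖B * R⁻¹ * Bᵀ‖ := norm_nonneg _
  have chain : ((PK - Ps) * (B * R⁻¹ * Bᵀ) * (PK - Ps) * Ys).trace
      ≤ ‖Ys‖ * (‖B * R⁻¹ * Bᵀ‖ * (PK.trace * (PK - Ps).trace)) := by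
    calc ((PK - Ps) * (B * R⁻¹ * Bᵀ) * (PK - Ps) * Ys).trace
        ≤ ‖Ys‖ * ((PK - Ps) * (B * R⁻¹ * Bᵀ) * (PK - Ps)).trace := t1
      _ ≤ ‖Ys‖ * (‖B * R⁻¹ * Bᵀ‖ * ((PK - Ps) * (PK - Ps)).trace) :=
          mul_le_mul_of_nonneg_left t2 hYsn
      _ ≤ ‖Ys‖ * (‖B * R⁻¹ * Bᵀ‖ * (PK.trace * (PK - Ps).trace)) :=
          mul_le_mul_of_nonneg_left (mul_le_mul_of_nonneg_left t3 hMMn) hYsn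
  have hfin : (1 + ‖Ys‖ * ‖B * R⁻¹ * Bᵀ‖ * PK.trace) * (PK - Ps).trace
      = (PK - Ps).trace + ‖Ys‖ * (‖B * R⁻¹ * Bᵀ‖ * (PK.trace * (PK - Ps).trace)) := by
    ring
  linarith [chain, htr2]
end

section
/- Subtracting the ARE from the Lyapunov equation for a stabilizing K and completing the square yields (A−BK)ᵀ(P_K − P*) + (P_K − P*)(A−BK) + (K−K*)ᵀR(K−K*) = 0; consequently 𝒥₂(K) − 𝒥₂(K*) = Tr(P_K − P*) = ⟨K−K*, R(K−K*)⟩_{Y_K} ≥ 0, so P_K ⪰ P* for every K ∈ 𝒢 and K* is the global minimizer of 𝒥₂ over 𝒢. -/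
open Matrix NormedSpace

private lemma dot_self_nonneg' {n : ℕ} (v : Fin n → ℝ) : 0 ≤ v ⬝ᵥ v := by
  simpa [dotProduct] using Finset.sum_nonneg (fun i _ => mul_self_nonneg (v i))

private lemma dot_sq_le' {n : ℕ} (u v : Fin n → ℝ) :
    (u ⬝ᵥ v) ^ 2 ≤ (u ⬝ᵥ u) * (v ⬝ᵥ v) := by
  simpa [dotProduct, sq] using Finset.sum_mul_sq_le_sq_mul_sq Finset.univ u v

private lemma mulVec_dot_le' {n : ℕ} (N : Matrix (Fin n) (Fin n) ℝ) (u : Fin n → ℝ) :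
    (N *ᵥ u) ⬝ᵥ (N *ᵥ u) ≤ (∑ i, ∑ j, (N i j)^2) * (u ⬝ᵥ u) := by
  have hu : u ⬝ᵥ u = ∑ j, (u j)^2 := by simp [dotProduct, sq]
  have hL : (N *ᵥ u) ⬝ᵥ (N *ᵥ u) = ∑ i, (∑ j, N i j * u j)^2 := by
    simp [dotProduct, Matrix.mulVec, sq]
  rw [hL, hu, Finset.sum_mul]
  refine Finset.sum_le_sum fun i _ => ?_
  exact Finset.sum_mul_sq_le_sq_mul_sq Finset.univ (fun j => N i j) u

private lemma dotT' {n : ℕ} (C : Matrix (Fin n) (Fin n) ℝ) (u v : Fin n → ℝ) :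
    u ⬝ᵥ (Cᵀ *ᵥ v) = (C *ᵥ u) ⬝ᵥ v := by
  rw [dotProduct_mulVec, Matrix.vecMul_transpose]

private lemma lyapunov_posSemidef' {n : ℕ} (Ab M Δ W : Matrix (Fin n) (Fin n) ℝ)
    (hM : M.PosSemidef) (hW : W.PosDef) (hΔ : Δ.IsHermitian)
    (hLyap : Abᵀ * Δ + Δ * Ab = -M)
    (hWlyap : Abᵀ * W + W * Ab = -(W * W)) :
    Δ.PosSemidef := by
  classical
  letI : SeminormedRing (Matrix (Fin n) (Fin n) ℝ) := Matrix.linftyOpSemiNormedRing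
  letI : NormedRing (Matrix (Fin n) (Fin n) ℝ) := Matrix.linftyOpNormedRing
  letI : NormedAlgebra ℝ (Matrix (Fin n) (Fin n) ℝ) := Matrix.linftyOpNormedAlgebra
  have hWsym : Wᵀ = W := by
    rw [← Matrix.conjTranspose_eq_transpose_of_trivial]; exact hW.isHermitian
  have hWdet : IsUnit W.det := isUnit_iff_ne_zero.2 hW.det_pos.ne'
  have hWinv2 : W⁻¹ * W = 1 := Matrix.nonsing_inv_mul _ hWdet
  refine Matrix.PosSemidef.of_dotProduct_mulVec_nonneg hΔ fun x => ?_
  rw [star_trivial]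
  by_contra hneg
  push_neg at hneg
  -- matrix exponentials
  set E : ℝ → Matrix (Fin n) (Fin n) ℝ := fun t => exp (t • Ab) with hEdef
  set Fm : ℝ → Matrix (Fin n) (Fin n) ℝ := fun t => exp (t • Abᵀ) with hFdef
  have hFE : ∀ t : ℝ, Fm t = (E t)ᵀ := fun t => by
    rw [hFdef, hEdef]
    simp only []
    rw [show (t • Abᵀ) = (t • Ab)ᵀ from (Matrix.transpose_smul t Ab).symm,
      Matrix.exp_transpose]
  have hEd : ∀ t, HasDerivAt E (Ab * E t) t := fun t => hasDerivAt_exp_smul_const' Ab t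
  have hFd : ∀ t, HasDerivAt Fm (Fm t * Abᵀ) t := fun t => hasDerivAt_exp_smul_const Abᵀ t
  have hE0 : E 0 = 1 := by rw [hEdef]; simp only []; rw [zero_smul, exp_zero]
  -- the quadratic-form functional
  let φ : Matrix (Fin n) (Fin n) ℝ →ₗ[ℝ] ℝ :=
    { toFun := fun N => x ⬝ᵥ (N *ᵥ x)
      map_add' := fun N₁ N₂ => by simp [Matrix.add_mulVec]
      map_smul' := fun c N => by simp [Matrix.smul_mulVec] }
  have hφ : ∀ (N : Matrix (Fin n) (Fin n) ℝ) (t : ℝ),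
      φ (Fm t * N * E t) = (E t *ᵥ x) ⬝ᵥ (N *ᵥ (E t *ᵥ x)) := by
    intro N t
    show x ⬝ᵥ ((Fm t * N * E t) *ᵥ x) = _
    rw [hFE t, Matrix.mul_assoc, ← Matrix.mulVec_mulVec, dotT', ← Matrix.mulVec_mulVec]
  have hGd : ∀ (N : Matrix (Fin n) (Fin n) ℝ) (t : ℝ),
      HasDerivAt (fun s => Fm s * N * E s) (Fm t * (Abᵀ * N + N * Ab) * E t) t := by
    intro N t
    have h := ((hFd t).mul_const N).mul (hEd t)
    have e : Fm t * (Abᵀ * N + N * Ab) * E t = Fm t * Abᵀ * N * E t + Fm t * N * (Ab * E t) := by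
      noncomm_ring
    rw [e]
    exact h
  have hder : ∀ (N : Matrix (Fin n) (Fin n) ℝ) (t : ℝ),
      HasDerivAt (fun s => φ (Fm s * N * E s)) (φ (Fm t * (Abᵀ * N + N * Ab) * E t)) t := by
    intro N t
    have h := (LinearMap.toContinuousLinearMap φ).hasFDerivAt.comp_hasDerivAt t (hGd N t)
    exact h
  set f : ℝ → ℝ := fun t => φ (Fm t * Δ * E t) with hfdef
  set g : ℝ → ℝ := fun t => φ (Fm t * W * E t) with hgdef
  set S : ℝ → ℝ := fun t => (W *ᵥ (E t *ᵥ x)) ⬝ᵥ (W *ᵥ (E t *ᵥ x)) with hSdef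
  have hfz : ∀ t, f t = (E t *ᵥ x) ⬝ᵥ (Δ *ᵥ (E t *ᵥ x)) := fun t => hφ Δ t
  have hgz : ∀ t, g t = (E t *ᵥ x) ⬝ᵥ (W *ᵥ (E t *ᵥ x)) := fun t => hφ W t
  have hfd : ∀ t, HasDerivAt f (-((E t *ᵥ x) ⬝ᵥ (M *ᵥ (E t *ᵥ x)))) t := by
    intro t
    have h := hder Δ t
    rw [hLyap] at h
    have e : φ (Fm t * -M * E t) = -((E t *ᵥ x) ⬝ᵥ (M *ᵥ (E t *ᵥ x))) := by
      rw [show Fm t * -M * E t = -(Fm t * M * E t) by noncomm_ring, map_neg, hφ]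
    rwa [e] at h
  have hgd : ∀ t, HasDerivAt g (-(S t)) t := by
    intro t
    have h := hder W t
    rw [hWlyap] at h
    have e : φ (Fm t * -(W * W) * E t) = -(S t) := by
      rw [show Fm t * -(W * W) * E t = -(Fm t * (W * W) * E t) by noncomm_ring, map_neg, hφ]
      rw [hSdef]
      simp only []
      congr 1
      rw [show (W * W) *ᵥ (E t *ᵥ x) = Wᵀ *ᵥ (W *ᵥ (E t *ᵥ x)) by
        rw [Matrix.mulVec_mulVec (E t *ᵥ x) Wᵀ W, hWsym], dotT']
    rwa [e] at h
  -- f is antitone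
  have hfanti : Antitone f := by
    apply antitone_of_hasDerivAt_nonpos hfd
    intro t
    simp only [Pi.zero_apply]
    have := hM.dotProduct_mulVec_nonneg (E t *ᵥ x)
    rw [star_trivial] at this
    linarith
  have hf0 : f 0 = x ⬝ᵥ (Δ *ᵥ x) := by rw [hfz 0, hE0, Matrix.one_mulVec]
  set ε : ℝ := -(x ⬝ᵥ (Δ *ᵥ x)) with hεdef
  have hε : 0 < ε := by rw [hεdef]; linarith
  set CΔ : ℝ := ∑ i, ∑ j, (Δ i j)^2 with hCΔdef
  set CW : ℝ := ∑ i, ∑ j, (W⁻¹ i j)^2 with hCWdef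
  have hCΔ0 : 0 ≤ CΔ := Finset.sum_nonneg fun i _ => Finset.sum_nonneg fun j _ => sq_nonneg _
  have hkey : ∀ t, 0 ≤ t → ε^2 ≤ (CΔ * CW^2) * (S t)^2 := by
    intro t ht
    have hft : f t ≤ f 0 := hfanti ht
    rw [hf0] at hft
    rw [hfz t] at hft
    set z := E t *ᵥ x with hzdef
    have h1 : ε ≤ -(z ⬝ᵥ (Δ *ᵥ z)) := by rw [hεdef]; linarith
    have h2 : ε^2 ≤ (z ⬝ᵥ (Δ *ᵥ z))^2 := by
      have := pow_le_pow_left₀ hε.le h1 2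
      simpa [neg_pow] using this
    have h3 : (z ⬝ᵥ (Δ *ᵥ z))^2 ≤ (z ⬝ᵥ z) * ((Δ *ᵥ z) ⬝ᵥ (Δ *ᵥ z)) := dot_sq_le' _ _
    have h4 : (Δ *ᵥ z) ⬝ᵥ (Δ *ᵥ z) ≤ CΔ * (z ⬝ᵥ z) := mulVec_dot_le' Δ z
    have h5 : z ⬝ᵥ z ≤ CW * S t := by
      have hz2 : z = W⁻¹ *ᵥ (W *ᵥ z) := by
        rw [Matrix.mulVec_mulVec, hWinv2, Matrix.one_mulVec]
      calc z ⬝ᵥ z = (W⁻¹ *ᵥ (W *ᵥ z)) ⬝ᵥ (W⁻¹ *ᵥ (W *ᵥ z)) := by rw [← hz2]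
        _ ≤ CW * ((W *ᵥ z) ⬝ᵥ (W *ᵥ z)) := mulVec_dot_le' _ _
        _ = CW * S t := rfl
    have hznn : 0 ≤ z ⬝ᵥ z := dot_self_nonneg' z
    have h6 : (z ⬝ᵥ z) * ((Δ *ᵥ z) ⬝ᵥ (Δ *ᵥ z)) ≤ CΔ * (z ⬝ᵥ z)^2 := by nlinarith
    have h7 : (z ⬝ᵥ z)^2 ≤ (CW * S t)^2 := pow_le_pow_left₀ hznn h5 2
    calc ε^2 ≤ (z ⬝ᵥ (Δ *ᵥ z))^2 := h2
      _ ≤ (z ⬝ᵥ z) * ((Δ *ᵥ z) ⬝ᵥ (Δ *ᵥ z)) := h3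
      _ ≤ CΔ * (z ⬝ᵥ z)^2 := h6
      _ ≤ CΔ * (CW * S t)^2 := mul_le_mul_of_nonneg_left h7 hCΔ0
      _ = (CΔ * CW^2) * (S t)^2 := by ring
  set C' : ℝ := CΔ * CW^2 with hC'def
  have hC' : 0 < C' := by
    have h := hkey 0 le_rfl
    have hε2 : 0 < ε^2 := pow_pos hε 2
    nlinarith [sq_nonneg (S 0)]
  set δ : ℝ := ε / Real.sqrt C' with hδdef
  have hsq : 0 < Real.sqrt C' := Real.sqrt_pos.2 hC'
  have hδ : 0 < δ := div_pos hε hsq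
  have hSδ : ∀ t, 0 ≤ t → δ ≤ S t := by
    intro t ht
    have h := hkey t ht
    have hS0 : 0 ≤ S t := dot_self_nonneg' _
    have h2 : Real.sqrt (ε^2) ≤ Real.sqrt (C' * (S t)^2) := Real.sqrt_le_sqrt h
    rw [Real.sqrt_sq hε.le, Real.sqrt_mul hC'.le, Real.sqrt_sq hS0] at h2
    rw [hδdef, div_le_iff₀ hsq]
    linarith
  have hhder : ∀ t, HasDerivAt (fun s => g s + δ * s) (-(S t) + δ) t := by
    intro t
    have h := (hgd t).add ((hasDerivAt_id t).const_mul δ)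
    rw [mul_one] at h
    exact h
  have hanti : AntitoneOn (fun s => g s + δ * s) (Set.Ici (0:ℝ)) := by
    apply antitoneOn_of_deriv_nonpos (convex_Ici 0)
    · exact (Differentiable.continuous fun t => (hhder t).differentiableAt).continuousOn
    · exact fun t _ => ((hhder t).differentiableAt).differentiableWithinAt
    · intro t ht
      rw [interior_Ici] at ht
      rw [(hhder t).deriv]
      have := hSδ t (le_of_lt ht)
      linarith
  have hgnn : ∀ t, 0 ≤ g t := by
    intro t
    rw [hgz t]
    have := hW.posSemidef.dotProduct_mulVec_nonneg (E t *ᵥ x)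
    rwa [star_trivial] at this
  set T : ℝ := (g 0 + 1) / δ with hTdef
  have hT0 : 0 ≤ T := div_nonneg (by linarith [hgnn 0]) hδ.le
  have hcon := hanti Set.self_mem_Ici (Set.mem_Ici.2 hT0) hT0
  simp only [mul_zero, add_zero] at hcon
  have hδT : δ * T = g 0 + 1 := by
    rw [hTdef]; field_simp
  have := hgnn T
  linarith

/-- Subtracting the ARE from the Lyapunov equation for a stabilizing `K` and completing
the square gives `(A−BK)ᵀ(P_K−P*) + (P_K−P*)(A−BK) + (K−K*)ᵀR(K−K*) = 0`; consequently
`𝒥₂(K) − 𝒥₂(K*) = Tr(P_K − P*) = ⟨K−K*, R(K−K*)⟩_{Y_K} ≥ 0`, so `P_K ⪰ P*` and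
`K*` is a global minimizer of `𝒥₂(K) = Tr(P_K)` over the stabilizing gains. -/

theorem cost_difference_identity_and_optimality {n m : ℕ}
    (A : Matrix (Fin n) (Fin n) ℝ) (B : Matrix (Fin n) (Fin m) ℝ)
    (Q : Matrix (Fin n) (Fin n) ℝ) (R : Matrix (Fin m) (Fin m) ℝ)
    (hQ : Q.PosDef) (hR : R.PosDef)
    (Ps : Matrix (Fin n) (Fin n) ℝ) (hPs : Ps.PosDef)
    (hARE : Aᵀ * Ps + Ps * A + Q - Ps * B * R⁻¹ * Bᵀ * Ps = 0)
    (Ks : Matrix (Fin m) (Fin n) ℝ) (hKs : Ks = R⁻¹ * Bᵀ * Ps)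
    (hKsHur : Hurwitz (A - B * Ks))
    (K : Matrix (Fin m) (Fin n) ℝ) (hK : Hurwitz (A - B * K))
    (PK : Matrix (Fin n) (Fin n) ℝ) (hPK : PK.PosDef)
    (hPKeq : (A - B * K)ᵀ * PK + PK * (A - B * K) + Q + Kᵀ * R * K = 0)
    (YK : Matrix (Fin n) (Fin n) ℝ) (hYK : YK.PosDef)
    (hYKeq : (A - B * K) * YK + YK * (A - B * K)ᵀ + 1 = 0) :
    (A - B * K)ᵀ * (PK - Ps) + (PK - Ps) * (A - B * K)
        + (K - Ks)ᵀ * R * (K - Ks) = 0 ∧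
      (PK - Ps).trace = ((K - Ks) * YK * (R * (K - Ks))ᵀ).trace ∧
      (PK - Ps).PosSemidef ∧
      Ps.trace ≤ PK.trace := by
  have hRdet : IsUnit R.det := isUnit_iff_ne_zero.2 hR.det_pos.ne'
  have hRsym : Rᵀ = R := by
    rw [← Matrix.conjTranspose_eq_transpose_of_trivial]; exact hR.isHermitian
  have hPsym : Psᵀ = Ps := by
    rw [← Matrix.conjTranspose_eq_transpose_of_trivial]; exact hPs.isHermitian
  have h1 : R * Ks = Bᵀ * Ps := by
    rw [hKs, ← Matrix.mul_assoc, ← Matrix.mul_assoc, Matrix.mul_nonsing_inv R hRdet,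
      Matrix.one_mul]
  have h2 : Ksᵀ * R = Ps * B := by
    have h := congrArg Matrix.transpose h1
    rw [Matrix.transpose_mul, Matrix.transpose_mul, Matrix.transpose_transpose, hRsym,
      hPsym] at h
    exact h
  have h3 : Ps * B * R⁻¹ * Bᵀ * Ps = Ksᵀ * (R * Ks) := by
    have e : Ps * B * R⁻¹ * Bᵀ * Ps = Ps * B * R⁻¹ * (Bᵀ * Ps) := by
      rw [Matrix.mul_assoc]
    rw [e, ← h2, ← h1, Matrix.mul_assoc Ksᵀ R R⁻¹, Matrix.mul_nonsing_inv R hRdet,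
      Matrix.mul_one]
  have goal1 : (A - B * K)ᵀ * (PK - Ps) + (PK - Ps) * (A - B * K)
      + (K - Ks)ᵀ * R * (K - Ks) = 0 := by
    have expand : (A - B * K)ᵀ * (PK - Ps) + (PK - Ps) * (A - B * K)
        + (K - Ks)ᵀ * R * (K - Ks)
        = ((A - B * K)ᵀ * PK + PK * (A - B * K) + Q + Kᵀ * R * K)
          - (Aᵀ * Ps + Ps * A + Q - Ps * B * R⁻¹ * Bᵀ * Ps)
          + (Kᵀ * (Bᵀ * Ps - R * Ks) + (Ps * B - Ksᵀ * R) * K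
             + (Ksᵀ * (R * Ks) - Ps * B * R⁻¹ * Bᵀ * Ps)) := by
      simp only [Matrix.transpose_sub, Matrix.transpose_mul, Matrix.sub_mul,
        Matrix.mul_sub, ← Matrix.mul_assoc]
      noncomm_ring
    rw [expand, hPKeq, hARE, h3, ← h1, ← h2]
    simp
  have hlyap : (A - B * K)ᵀ * (PK - Ps) + (PK - Ps) * (A - B * K)
      = -((K - Ks)ᵀ * R * (K - Ks)) := eq_neg_of_add_eq_zero_left goal1
  have hYK1 : (A - B * K) * YK + YK * (A - B * K)ᵀ = -1 := eq_neg_of_add_eq_zero_left hYKeq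
  -- the trace identity
  have t5 : (PK - Ps).trace = -(((PK - Ps) * ((A - B * K) * YK)).trace
      + ((PK - Ps) * (YK * (A - B * K)ᵀ)).trace) := by
    have hz : (PK - Ps) * ((A - B * K) * YK + YK * (A - B * K)ᵀ) + (PK - Ps) = 0 := by
      rw [hYK1]; simp
    have h := congrArg Matrix.trace hz
    rw [Matrix.trace_add, Matrix.trace_zero, Matrix.mul_add, Matrix.trace_add] at h
    linarith
  have t2 : ((PK - Ps) * (YK * (A - B * K)ᵀ)).trace
      = ((A - B * K)ᵀ * (PK - Ps) * YK).trace := by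
    rw [← Matrix.mul_assoc, Matrix.trace_mul_comm, ← Matrix.mul_assoc]
  have t3 : ((PK - Ps) * ((A - B * K) * YK)).trace
      = ((PK - Ps) * (A - B * K) * YK).trace := by
    rw [Matrix.mul_assoc]
  have t4 : ((A - B * K)ᵀ * (PK - Ps) * YK).trace + ((PK - Ps) * (A - B * K) * YK).trace
      = -(((K - Ks)ᵀ * R * (K - Ks) * YK).trace) := by
    rw [← Matrix.trace_add, ← Matrix.add_mul, hlyap, Matrix.neg_mul, Matrix.trace_neg]
  have goal2 : (PK - Ps).trace = ((K - Ks) * YK * (R * (K - Ks))ᵀ).trace := by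
    have tr1 : (PK - Ps).trace = ((K - Ks)ᵀ * R * (K - Ks) * YK).trace := by
      rw [t5, t3, t2]; linarith
    rw [tr1]
    have hRt : (R * (K - Ks))ᵀ = (K - Ks)ᵀ * R := by rw [Matrix.transpose_mul, hRsym]
    rw [hRt]
    have e : (K - Ks)ᵀ * R * (K - Ks) * YK = ((K - Ks)ᵀ * R) * ((K - Ks) * YK) := by
      rw [Matrix.mul_assoc ((K - Ks)ᵀ * R) (K - Ks) YK]
    rw [e, Matrix.trace_mul_comm]
  -- positive semidefiniteness via the Lyapunov argument
  have hYdet : IsUnit YK.det := isUnit_iff_ne_zero.2 hYK.det_pos.ne'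
  have hYi1 : YK * YK⁻¹ = 1 := Matrix.mul_nonsing_inv _ hYdet
  have hYi2 : YK⁻¹ * YK = 1 := Matrix.nonsing_inv_mul _ hYdet
  have hWlyap : (A - B * K)ᵀ * YK⁻¹ + YK⁻¹ * (A - B * K) = -(YK⁻¹ * YK⁻¹) := by
    have h : YK⁻¹ * ((A - B * K) * YK + YK * (A - B * K)ᵀ) * YK⁻¹
        = YK⁻¹ * (-1) * YK⁻¹ := by rw [hYK1]
    have hL : YK⁻¹ * ((A - B * K) * YK + YK * (A - B * K)ᵀ) * YK⁻¹
        = YK⁻¹ * (A - B * K) * (YK * YK⁻¹) + (YK⁻¹ * YK) * ((A - B * K)ᵀ * YK⁻¹) := by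
      noncomm_ring
    have hRr : YK⁻¹ * (-1 : Matrix (Fin n) (Fin n) ℝ) * YK⁻¹ = -(YK⁻¹ * YK⁻¹) := by
      noncomm_ring
    rw [hL, hYi1, hYi2, Matrix.mul_one, Matrix.one_mul, hRr] at h
    rw [add_comm]
    exact h
  have hMpsd : ((K - Ks)ᵀ * R * (K - Ks)).PosSemidef := by
    have h := hR.posSemidef.conjTranspose_mul_mul_same (K - Ks)
    rwa [Matrix.conjTranspose_eq_transpose_of_trivial] at h
  have goal3 : (PK - Ps).PosSemidef := by
    refine lyapunov_posSemidef' (A - B * K) ((K - Ks)ᵀ * R * (K - Ks)) (PK - Ps) YK⁻¹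
      hMpsd hYK.inv (hPK.isHermitian.sub hPs.isHermitian) hlyap hWlyap
  refine ⟨goal1, goal2, goal3, ?_⟩
  have htr : 0 ≤ (PK - Ps).trace := by
    rw [Matrix.trace]
    refine Finset.sum_nonneg fun i _ => ?_
    have h := goal3.dotProduct_mulVec_nonneg (Pi.single i 1)
    rw [star_trivial] at h
    simpa [Matrix.diag, Matrix.mulVec, dotProduct, Pi.single_apply, mul_ite,
      ite_mul, Finset.sum_ite_eq, Finset.sum_ite_eq'] using h
  rw [Matrix.trace_sub] at htr
  linarith
end

section
/- Consider the scalar LQR example A=0, B=Q=R=1, so 𝒢=(0,∞), 𝒥₂(K) = (K²+1)/(2K), K*=1. Under the natural gradient descent update K' = K − η(K²−1)/K with 0 < η < 1, it holds that 𝒥₂(K') − 𝒥₂(K) = −η·m(K,η)·(𝒥₂(K) − 𝒥₂(K*)) where m(K,η) = (1−η)(K+1)²/((1−η)K² + η), and m(K,η) → 1 as K → ∞. -/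
open Filter


/-- Scalar LQR example (`A = 0`, `B = Q = R = 1`, `𝒥₂(K) = (K²+1)/(2K)`, `K* = 1`):
under the natural gradient update `K' = K − η(K²−1)/K` with `0 < η < 1`, the iterate
stays in `𝒢 = (0,∞)` and
`𝒥₂(K') − 𝒥₂(K) = −η·m(K,η)·(𝒥₂(K) − 𝒥₂(K*))` with
`m(K,η) = (1−η)(K+1)²/((1−η)K² + η)`; moreover `m(K,η) → 1` as `K → ∞`. -/
theorem scalar_natural_gradient_descent (η : ℝ) (hη0 : 0 < η) (hη1 : η < 1) :
    (∀ K : ℝ, 0 < K →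
      0 < K - η * (K ^ 2 - 1) / K ∧
      ((K - η * (K ^ 2 - 1) / K) ^ 2 + 1) / (2 * (K - η * (K ^ 2 - 1) / K))
          - (K ^ 2 + 1) / (2 * K) =
        -η * ((1 - η) * (K + 1) ^ 2 / ((1 - η) * K ^ 2 + η))
          * ((K ^ 2 + 1) / (2 * K) - 1)) ∧
    Filter.Tendsto (fun K : ℝ => (1 - η) * (K + 1) ^ 2 / ((1 - η) * K ^ 2 + η))
      Filter.atTop (nhds 1) := by
  have h1η : (0:ℝ) < 1 - η := by linarith
  constructor
  · intro K hK
    have hK0 : K ≠ 0 := ne_of_gt hK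
    have hD : 0 < (1 - η) * K ^ 2 + η := by positivity
    have hKpos : 0 < K - η * (K ^ 2 - 1) / K := by
      have : K - η * (K ^ 2 - 1) / K = ((1 - η) * K ^ 2 + η) / K := by
        field_simp; ring
      rw [this]; positivity
    refine ⟨hKpos, ?_⟩
    have hrw : K - η * (K ^ 2 - 1) / K = ((1 - η) * K ^ 2 + η) / K := by
      field_simp; ring
    rw [hrw]
    have hD' : (1 - η) * K ^ 2 + η ≠ 0 := ne_of_gt hD
    field_simp
    ring
  · have h0 : Filter.Tendsto (fun K : ℝ => 1 + 1/K) Filter.atTop (nhds (1 + 0)) :=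
      tendsto_const_nhds.add (tendsto_const_nhds.div_atTop tendsto_id)
    have h1 : Filter.Tendsto (fun K : ℝ => (1 - η) * (1 + 1/K) ^ 2)
        Filter.atTop (nhds ((1 - η) * (1 + 0) ^ 2)) := (h0.pow 2).const_mul _
    have h2 : Filter.Tendsto (fun K : ℝ => (1 - η) + η / K ^ 2)
        Filter.atTop (nhds ((1 - η) + 0)) := by
      exact tendsto_const_nhds.add
        (tendsto_const_nhds.div_atTop (Filter.tendsto_pow_atTop two_ne_zero))
    have := h1.div h2 (by simpa using ne_of_gt h1η)
    have heq : (1 - η) * (1 + 0) ^ 2 / (1 - η + 0) = 1 := by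
      field_simp
      ring
    rw [heq] at this
    refine this.congr' ?_
    filter_upwards [Filter.eventually_gt_atTop 0] with K hK
    have hK0 : K ≠ 0 := ne_of_gt hK
    have hD : (1 - η) * K ^ 2 + η ≠ 0 := by positivity
    simp only [Pi.div_apply]
    field_simp
end
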